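/- arXiv:1906.06611 — 8 statements merged into one kernel-verified Lean document; each statement's English description precedes it below -/
import Mathlib

section
/- For a finite simple graph G=(V,E) and a locally injective function g:V→ℝ (i.e., g(x)≠g(y) whenever (x,y)∈E), the f-polynomial satisfies f_G(t) = 1 + t·Σ_{x∈V} f_{S_g(x)}(t), where S_g(x) is the subgraph of the unit sphere S(x) induced by the vertices y adjacent to x with g(y)<g(x). -/
open Finset
open scoped Classical

/-- The f-polynomial of a finite simple graph:
`f_G(t) = 1 + f_0 t + f_1 t^2 + ... ` where `f_k` counts cliques on `k+1` vertices. -/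
noncomputable def fPoly {V : Type*} [Fintype V] (G : SimpleGraph V) (t : ℝ) : ℝ :=
  1 + ∑ k ∈ Finset.range (Fintype.card V), ((G.cliqueFinset (k + 1)).card : ℝ) * t ^ (k + 1)

/-- The part of the unit sphere of `x` where `g` is smaller than `g x`. -/
def sphereSet {V : Type*} (G : SimpleGraph V) (g : V → ℝ) (x : V) : Set V :=
  {y | G.Adj x y ∧ g y < g x}

/-- The sub-level unit sphere `S_g(x)` as an induced subgraph. -/
def sphereBelow {V : Type*} (G : SimpleGraph V) (g : V → ℝ) (x : V) :
    SimpleGraph (sphereSet G g x) :=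
  G.induce (sphereSet G g x)

lemma clique_zero_of_big {W : Type*} [Fintype W] (H : SimpleGraph W) {m : ℕ}
    (hm : Fintype.card W < m) : (H.cliqueFinset m).card = 0 := by
  rw [Finset.card_eq_zero, Finset.eq_empty_iff_forall_notMem]
  intro K hK
  rw [SimpleGraph.mem_cliqueFinset_iff] at hK
  have := K.card_le_univ
  rw [hK.card_eq] at this; omega
  -- K.card = m ≤ card W

lemma clique_card_congr {W : Type*} [Fintype W] (H : SimpleGraph W) (n : ℕ)
    (d1 d2 : DecidableEq W) (r1 r2 : DecidableRel H.Adj) :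
    (@SimpleGraph.cliqueFinset W H _ d1 r1 n).card
      = (@SimpleGraph.cliqueFinset W H _ d2 r2 n).card := by
  congr!

lemma fPoly_ext {W : Type*} [Fintype W] (H : SimpleGraph W) (t : ℝ) {N : ℕ}
    (h : Fintype.card W ≤ N) :
    fPoly H t = 1 + ∑ k ∈ Finset.range N, ((H.cliqueFinset (k + 1)).card : ℝ) * t ^ (k + 1) := by
  rw [fPoly]
  congr 1
  refine Finset.sum_subset (Finset.range_subset_range.2 h) ?_
  intro j _ hj
  rw [Finset.mem_range, not_lt] at hj
  rw [clique_zero_of_big _ (by omega : Fintype.card W < j + 1)]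
  simp

lemma clique_one_card {W : Type*} [Fintype W] (H : SimpleGraph W) :
    (H.cliqueFinset 0).card = 1 := by
  rw [show H.cliqueFinset 0 = {∅} from by
    ext s; simp [SimpleGraph.mem_cliqueFinset_iff, SimpleGraph.isNClique_zero]]
  rfl

lemma card_clique_succ {V : Type*} [Fintype V] (G : SimpleGraph V) (g : V → ℝ)
    (hg : ∀ ⦃a b : V⦄, G.Adj a b → g a ≠ g b) (k : ℕ) :
    (G.cliqueFinset (k + 1)).card = ∑ x : V, ((sphereBelow G g x).cliqueFinset k).card := by
  rcases isEmpty_or_nonempty V with hV | hV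
  · rw [clique_zero_of_big G (by rw [Fintype.card_eq_zero]; omega)]
    simp
  · set f : Finset V → V := fun K =>
      if h : K.Nonempty then (K.exists_max_image g h).choose else Classical.arbitrary V with hf
    have hfspec : ∀ K : Finset V, K.Nonempty → f K ∈ K ∧ ∀ z ∈ K, g z ≤ g (f K) := by
      intro K h
      simp only [hf, dif_pos h]
      exact (K.exists_max_image g h).choose_spec
    rw [Finset.card_eq_sum_card_fiberwise (f := f) (t := Finset.univ) (fun K _ => mem_univ _)]
    refine Finset.sum_congr rfl fun x _ => ?_
    -- bijection between cliques with max x and cliques of the sphere at x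
    refine Finset.card_bij'
      (fun K _ => (K.erase x).subtype (· ∈ sphereSet G g x))
      (fun L _ => insert x (L.image Subtype.val)) ?_ ?_ ?_ ?_
    · -- forward map lands in sphere cliques
      intro K hK
      simp only [Finset.mem_filter, SimpleGraph.mem_cliqueFinset_iff] at hK
      obtain ⟨⟨hcl, hcard⟩, hfx⟩ := hK
      have hKne : K.Nonempty := Finset.card_pos.1 (by omega)
      obtain ⟨hxK, hmax⟩ := hfspec K hKne
      rw [hfx] at hxK hmax
      have hsub : ∀ y ∈ K.erase x, y ∈ sphereSet G g x := by
        intro y hy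
        obtain ⟨hyx, hyK⟩ := Finset.mem_erase.1 hy
        have hadj : G.Adj x y := hcl hxK hyK (Ne.symm hyx)
        exact ⟨hadj, lt_of_le_of_ne (hmax y hyK) (Ne.symm (hg hadj))⟩
      rw [SimpleGraph.mem_cliqueFinset_iff]
      constructor
      · intro a ha b hb hab
        have ha' : (a : V) ∈ K.erase x := Finset.mem_subtype.1 ha
        have hb' : (b : V) ∈ K.erase x := Finset.mem_subtype.1 hb
        exact hcl (Finset.mem_of_mem_erase ha') (Finset.mem_of_mem_erase hb')
          (fun h => hab (Subtype.ext h))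
      · have : ((K.erase x).subtype (· ∈ sphereSet G g x)).map
            (Function.Embedding.subtype _) = K.erase x := by
          rw [Finset.subtype_map_of_mem hsub]
        have hc := congrArg Finset.card this
        rw [Finset.card_map] at hc
        rw [hc, Finset.card_erase_of_mem hxK, hcard]
        omega
    · -- backward map lands in the fiber
      intro L hL
      rw [SimpleGraph.mem_cliqueFinset_iff] at hL
      obtain ⟨hcl, hcard⟩ := hL
      have hxnot : x ∉ L.image Subtype.val := by
        intro hx
        obtain ⟨⟨y, hy⟩, _, hyx⟩ := Finset.mem_image.1 hx
        exact G.irrefl (hyx ▸ hy.1)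
      have hclK : G.IsClique (insert x (L.image Subtype.val) : Finset V) := by
        intro a ha b hb hab
        simp only [Finset.coe_insert, Set.mem_insert_iff, Finset.coe_image, Set.mem_image,
          Finset.mem_coe] at ha hb
        rcases ha with rfl | ⟨a', ha', rfl⟩
        · rcases hb with rfl | ⟨b', hb', rfl⟩
          · exact absurd rfl hab
          · exact b'.2.1
        · rcases hb with rfl | ⟨b', hb', rfl⟩
          · exact (a'.2.1).symm
          · exact hcl ha' hb' (fun h => hab (congrArg _ h))
      have hcK : (insert x (L.image Subtype.val)).card = k + 1 := by
        rw [Finset.card_insert_of_notMem hxnot,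
          Finset.card_image_of_injective _ Subtype.val_injective, hcard]
      refine Finset.mem_filter.2 ⟨SimpleGraph.mem_cliqueFinset_iff.2 ⟨hclK, hcK⟩, ?_⟩
      have hne : (insert x (L.image Subtype.val)).Nonempty := ⟨x, Finset.mem_insert_self _ _⟩
      obtain ⟨hmem, hmax⟩ := hfspec _ hne
      rcases Finset.mem_insert.1 hmem with h | h
      · exact h
      · exfalso
        obtain ⟨⟨y, hy⟩, _, hyx⟩ := Finset.mem_image.1 h
        have := hmax x (Finset.mem_insert_self _ _)
        rw [← hyx] at this
        exact absurd this (not_le.2 hy.2)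
    · -- left inverse
      intro K hK
      simp only [Finset.mem_filter, SimpleGraph.mem_cliqueFinset_iff] at hK
      obtain ⟨⟨hcl, hcard⟩, hfx⟩ := hK
      have hKne : K.Nonempty := Finset.card_pos.1 (by omega)
      obtain ⟨hxK, hmax⟩ := hfspec K hKne
      rw [hfx] at hxK hmax
      have hsub : ∀ y ∈ K.erase x, y ∈ sphereSet G g x := by
        intro y hy
        obtain ⟨hyx, hyK⟩ := Finset.mem_erase.1 hy
        have hadj : G.Adj x y := hcl hxK hyK (Ne.symm hyx)
        exact ⟨hadj, lt_of_le_of_ne (hmax y hyK) (Ne.symm (hg hadj))⟩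
      ext a
      simp only [Finset.mem_insert, Finset.mem_image, Finset.mem_subtype]
      constructor
      · rintro (rfl | ⟨⟨b, hb⟩, hb', rfl⟩)
        · exact hxK
        · exact Finset.mem_of_mem_erase hb'
      · intro haK
        by_cases hax : a = x
        · exact Or.inl hax
        · exact Or.inr ⟨⟨a, hsub a (Finset.mem_erase.2 ⟨hax, haK⟩)⟩,
            Finset.mem_erase.2 ⟨hax, haK⟩, rfl⟩
    · -- right inverse
      intro L hL
      have hxnot : x ∉ L.image Subtype.val := by
        intro hx
        obtain ⟨⟨y, hy⟩, _, hyx⟩ := Finset.mem_image.1 hx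
        exact G.irrefl (hyx ▸ hy.1)
      ext ⟨a, ha⟩
      simp only [Finset.mem_subtype, Finset.mem_erase, Finset.mem_insert, Finset.mem_image]
      constructor
      · rintro ⟨hax, rfl | ⟨⟨b, hb⟩, hb', rfl⟩⟩
        · exact absurd rfl hax
        · exact hb'
      · intro haL
        refine ⟨fun h => G.irrefl (h ▸ ha.1), Or.inr ⟨⟨a, ha⟩, haL, rfl⟩⟩

/-- Parametrized Poincaré–Hopf: `f_G(t) = 1 + t ∑_x f_{S_g(x)}(t)` for locally injective `g`. -/
theorem parametrized_poincare_hopf {V : Type*} [Fintype V] (G : SimpleGraph V) (g : V → ℝ)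
    (hg : ∀ ⦃a b : V⦄, G.Adj a b → g a ≠ g b) (t : ℝ) :
    fPoly G t = 1 + t * ∑ x : V, fPoly (sphereBelow G g x) t := by
  rcases isEmpty_or_nonempty V with hV | hV
  · simp [fPoly, Fintype.card_eq_zero]
  · obtain ⟨N, hN⟩ : ∃ N, Fintype.card V = N + 1 :=
      ⟨Fintype.card V - 1, by have := Fintype.card_pos (α := V); omega⟩
    have hsx : ∀ x : V, Fintype.card (sphereSet G g x) ≤ N := by
      intro x
      have : Fintype.card (sphereSet G g x) < Fintype.card V := by
        refine Fintype.card_lt_of_injective_of_notMem Subtype.val Subtype.val_injective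
          (b := x) ?_
        rintro ⟨⟨y, hy⟩, h⟩
        have hyx : y = x := h
        exact G.irrefl (hyx ▸ hy.1)
      omega
    have swap : ∀ a : V → ℕ → ℝ,
        ∑ x : V, (1 + ∑ k ∈ Finset.range N, a x k * t ^ (k + 1))
          = (Fintype.card V : ℝ)
            + ∑ k ∈ Finset.range N, (∑ x : V, a x k) * t ^ (k + 1) := by
      intro a
      rw [Finset.sum_add_distrib, Finset.sum_const, Finset.sum_comm, nsmul_eq_mul, mul_one,
        Finset.card_univ]
      congr 1
      exact Finset.sum_congr rfl fun k _ => (Finset.sum_mul _ _ _).symm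
    rw [Finset.sum_congr rfl fun x _ => fPoly_ext (sphereBelow G g x) t (hsx x), swap, fPoly,
      hN, Finset.sum_range_succ']
    rw [mul_add]
    have h1 : ((G.cliqueFinset (0 + 1)).card : ℝ) * t ^ (0 + 1) = t * ((N + 1 : ℕ) : ℝ) := by
      rw [card_clique_succ G g hg 0]
      have hone : ∀ x : V, ((sphereBelow G g x).cliqueFinset 0).card = 1 := by
        intro x
        rw [show (sphereBelow G g x).cliqueFinset 0 = {∅} from by
          ext s; simp [SimpleGraph.mem_cliqueFinset_iff, SimpleGraph.isNClique_zero]]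
        rfl
      rw [Finset.sum_congr rfl fun x _ => hone x]
      simp [Finset.card_univ, hN, mul_comm]
    rw [h1, Finset.mul_sum]
    congr 1
    rw [add_comm]
    congr 1
    refine Finset.sum_congr rfl fun k _ => ?_
    rw [card_clique_succ G g hg (k + 1)]
    have hc : ∀ x : V,
        ((((sphereBelow G g x).cliqueFinset (k + 1)).card : ℕ) : ℝ)
          = (((@SimpleGraph.cliqueFinset _ (sphereBelow G g x) _
              (fun a b => Classical.propDecidable (a = b))
              (fun a b => Classical.propDecidable ((sphereBelow G g x).Adj a b))
              (k + 1)).card : ℕ) : ℝ) := by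
      intro x
      congr!
    push_cast
    rw [Finset.sum_congr rfl fun x _ => hc x]
    ring
end

section
/- For a finite simple graph G=(V,E) and a locally injective function g:V→ℝ, the Euler characteristic satisfies χ(G) = Σ_{x∈V} i_g(x), where i_g(x) = 1 - χ(S_g(x)). -/
open Finset
open scoped Classical

/-- Euler characteristic `χ(G) = Σ_k (-1)^k f_k` where `f_k` counts cliques on `k+1` vertices. -/
noncomputable def eulerChar {V : Type*} [Fintype V] (G : SimpleGraph V) : ℝ :=
  ∑ k ∈ Finset.range (Fintype.card V), (-1 : ℝ) ^ k * ((G.cliqueFinset (k + 1)).card : ℝ)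

section Aux

variable {V : Type*} [Fintype V] (G : SimpleGraph V) (g : V → ℝ)

/-- A vertex of `K` maximizing `g` (or a junk value if `K = ∅`). -/
noncomputable def topVtx [Nonempty V] (K : Finset V) : V :=
  if h : K.Nonempty then (K.exists_max_image g h).choose else Classical.arbitrary V

lemma topVtx_mem [Nonempty V] {K : Finset V} (h : K.Nonempty) : topVtx g K ∈ K := by
  rw [topVtx, dif_pos h]
  exact (K.exists_max_image g h).choose_spec.1

lemma topVtx_max [Nonempty V] {K : Finset V} (h : K.Nonempty) :
    ∀ y ∈ K, g y ≤ g (topVtx g K) := by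
  rw [topVtx, dif_pos h]
  exact (K.exists_max_image g h).choose_spec.2

variable (hg : ∀ ⦃a b : V⦄, G.Adj a b → g a ≠ g b)
include hg

/-- In a clique, a vertex maximizing `g` is unique. -/
lemma max_unique {K : Finset V} (hK : G.IsClique K) {b b' : V} (hb : b ∈ K) (hb' : b' ∈ K)
    (h1 : ∀ y ∈ K, g y ≤ g b) (h2 : ∀ y ∈ K, g y ≤ g b') : b = b' := by
  by_contra hne
  exact hg (hK hb hb' hne) (le_antisymm (h2 b hb) (h1 b' hb'))

lemma key [Nonempty V] (n : ℕ) :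
    ((G.cliqueFinset (n + 1)).card : ℝ)
      = ∑ x : V, (((sphereBelow G g x).cliqueFinset n).card : ℝ) := by
  have hfib : (G.cliqueFinset (n + 1)).card
      = ∑ x : V, ((G.cliqueFinset (n + 1)).filter (fun K => topVtx g K = x)).card := by
    exact Finset.card_eq_sum_card_fiberwise (fun K _ => Finset.mem_univ _)
  rw [hfib]
  push_cast
  refine Finset.sum_congr rfl fun x _ => ?_
  congr 1
  -- bijection between cliques with top vertex x and cliques of the sphere
  refine Finset.card_bij'
    (fun K _ => (K.erase x).subtype (· ∈ sphereSet G g x))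
    (fun A _ => insert x (A.map (Function.Embedding.subtype _))) ?hi ?hj ?li ?ri
  case hi =>
    -- maps into target
    intro K hK
    rw [Finset.mem_filter, SimpleGraph.mem_cliqueFinset_iff] at hK
    obtain ⟨⟨hKcl, hKcard⟩, htop⟩ := hK
    have hKne : K.Nonempty := Finset.card_pos.mp (by omega)
    have hxK : x ∈ K := htop ▸ topVtx_mem g hKne
    have hmem : ∀ y ∈ K.erase x, y ∈ sphereSet G g x := by
      intro y hy
      have hyne : y ≠ x := Finset.ne_of_mem_erase hy
      have hyK : y ∈ K := Finset.mem_of_mem_erase hy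
      have hadj : G.Adj x y := hKcl hxK hyK (Ne.symm hyne)
      have hle : g y ≤ g x := htop ▸ topVtx_max g hKne y hyK
      exact ⟨hadj, lt_of_le_of_ne hle (fun he => hg hadj he.symm)⟩
    rw [SimpleGraph.mem_cliqueFinset_iff]
    constructor
    · intro a ha b hb hne
      simp only [Finset.mem_coe, Finset.mem_subtype] at ha hb
      exact hKcl (Finset.mem_of_mem_erase ha) (Finset.mem_of_mem_erase hb)
        (fun he => hne (Subtype.ext he))
    · rw [Finset.card_subtype, Finset.filter_true_of_mem hmem,
        Finset.card_erase_of_mem hxK, hKcard]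
      omega
  case hj =>
    intro A hA
    rw [SimpleGraph.mem_cliqueFinset_iff] at hA
    obtain ⟨hAcl, hAcard⟩ := hA
    have hxnot : x ∉ A.map (Function.Embedding.subtype _) := by
      simp only [Finset.mem_map, Function.Embedding.coe_subtype]
      rintro ⟨⟨y, hy⟩, -, hyx⟩
      simp only [Function.Embedding.coe_subtype] at hyx
      subst hyx
      exact absurd hy.2 (lt_irrefl _)
    have hcl : G.IsClique ↑(insert x (A.map (Function.Embedding.subtype
        (· ∈ sphereSet G g x)))) := by
      intro a ha b hb hne
      simp only [Finset.coe_insert, Set.mem_insert_iff, Finset.mem_coe, Finset.mem_map,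
        Function.Embedding.coe_subtype] at ha hb
      rcases ha with rfl | ⟨⟨a', ha'⟩, haA, rfl⟩
      · rcases hb with rfl | ⟨⟨b', hb'⟩, hbA, rfl⟩
        · exact absurd rfl hne
        · exact hb'.1
      · rcases hb with rfl | ⟨⟨b', hb'⟩, hbA, rfl⟩
        · exact ha'.1.symm
        · exact hAcl haA hbA (fun he => hne (congrArg Subtype.val he))
    have hmax : ∀ y ∈ insert x (A.map (Function.Embedding.subtype
        (· ∈ sphereSet G g x))), g y ≤ g x := by
      intro y hy
      rcases Finset.mem_insert.mp hy with rfl | hy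
      · exact le_refl _
      · simp only [Finset.mem_map, Function.Embedding.coe_subtype] at hy
        obtain ⟨⟨y', hy'⟩, -, rfl⟩ := hy
        exact le_of_lt hy'.2
    have hne : (insert x (A.map (Function.Embedding.subtype
        (· ∈ sphereSet G g x)))).Nonempty := ⟨x, Finset.mem_insert_self _ _⟩
    rw [Finset.mem_filter, SimpleGraph.mem_cliqueFinset_iff]
    refine ⟨⟨hcl, ?_⟩, ?_⟩
    · rw [Finset.card_insert_of_notMem hxnot, Finset.card_map, hAcard]
    · exact max_unique G g hg hcl (topVtx_mem g hne) (Finset.mem_insert_self _ _)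
        (topVtx_max g hne) hmax
  case li =>
    intro K hK
    rw [Finset.mem_filter, SimpleGraph.mem_cliqueFinset_iff] at hK
    obtain ⟨⟨hKcl, hKcard⟩, htop⟩ := hK
    have hKne : K.Nonempty := Finset.card_pos.mp (by omega)
    have hxK : x ∈ K := htop ▸ topVtx_mem g hKne
    have hmem : ∀ y ∈ K.erase x, y ∈ sphereSet G g x := by
      intro y hy
      have hyne : y ≠ x := Finset.ne_of_mem_erase hy
      have hyK : y ∈ K := Finset.mem_of_mem_erase hy
      have hadj : G.Adj x y := hKcl hxK hyK (Ne.symm hyne)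
      have hle : g y ≤ g x := htop ▸ topVtx_max g hKne y hyK
      exact ⟨hadj, lt_of_le_of_ne hle (fun he => hg hadj he.symm)⟩
    show insert x (((K.erase x).subtype (fun y => y ∈ sphereSet G g x)).map
      (Function.Embedding.subtype _)) = K
    rw [Finset.subtype_map_of_mem hmem, Finset.insert_erase hxK]
  case ri =>
    intro A hA
    ext ⟨a, ha⟩
    simp only [Finset.mem_subtype, Finset.mem_erase, Finset.mem_insert, Finset.mem_map,
      Function.Embedding.coe_subtype]
    constructor
    · rintro ⟨hne, rfl | ⟨⟨b, hb⟩, hbA, hba⟩⟩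
      · exact absurd rfl hne
      · obtain rfl : b = a := hba
        exact hbA
    · intro haA
      refine ⟨fun he => absurd ha ?_, Or.inr ⟨⟨a, ha⟩, haA, rfl⟩⟩
      subst he
      exact fun h => absurd h.2 (lt_irrefl _)

end Aux

/-- Cliques bigger than the vertex count don't exist, so the Euler characteristic sum can be
extended to any length past the vertex count. -/
lemma eulerChar_eq_sum {W : Type*} [Fintype W] (H : SimpleGraph W) {N : ℕ}
    (hN : Fintype.card W ≤ N) :
    eulerChar H = ∑ k ∈ Finset.range N, (-1 : ℝ) ^ k * ((H.cliqueFinset (k + 1)).card : ℝ) := by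
  rw [eulerChar]
  apply Finset.sum_subset (Finset.range_subset_range.mpr hN)
  intro k _ hk
  rw [Finset.mem_range, not_lt] at hk
  have : H.cliqueFinset (k + 1) = ∅ :=
    SimpleGraph.cliqueFinset_eq_empty_iff.mpr
      (SimpleGraph.cliqueFree_of_card_lt (by omega))
  rw [this]
  simp

/-- Poincaré–Hopf: `χ(G) = Σ_x i_g(x)` with `i_g(x) = 1 - χ(S_g(x))`. -/
theorem poincare_hopf {V : Type*} [Fintype V] (G : SimpleGraph V) (g : V → ℝ)
    (hg : ∀ ⦃a b : V⦄, G.Adj a b → g a ≠ g b) :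
    eulerChar G = ∑ x : V, (1 - eulerChar (sphereBelow G g x)) := by
  rcases isEmpty_or_nonempty V with hV | hV
  · rw [eulerChar, Fintype.card_eq_zero, Finset.range_zero, Finset.sum_empty,
      Finset.univ_eq_empty, Finset.sum_empty]
  · set N := Fintype.card V with hNdef
    have hN : 0 < N := Fintype.card_pos
    obtain ⟨m, hm⟩ : ∃ m, N = m + 1 := ⟨N - 1, by omega⟩
    have hcard : ∀ x : V, Fintype.card (sphereSet G g x) ≤ m := by
      intro x
      have : Fintype.card (sphereSet G g x) < N :=
        Fintype.card_subtype_lt (x := x) (fun h => absurd h.2 (lt_irrefl _))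
      omega
    calc eulerChar G
        = ∑ k ∈ Finset.range N, (-1 : ℝ) ^ k * ((G.cliqueFinset (k + 1)).card : ℝ) := rfl
      _ = ∑ k ∈ Finset.range N, (-1 : ℝ) ^ k *
            ∑ x : V, (((sphereBelow G g x).cliqueFinset k).card : ℝ) := by
          refine Finset.sum_congr rfl fun k _ => ?_
          rw [key G g hg k]
      _ = ∑ x : V, ∑ k ∈ Finset.range N, (-1 : ℝ) ^ k *
            (((sphereBelow G g x).cliqueFinset k).card : ℝ) := by
          rw [Finset.sum_comm]
          simp_rw [Finset.mul_sum]
      _ = ∑ x : V, (1 - eulerChar (sphereBelow G g x)) := by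
          refine Finset.sum_congr rfl fun x _ => ?_
          rw [hm, Finset.sum_range_succ']
          have h0 : ((sphereBelow G g x).cliqueFinset 0).card = 1 := by
            have : (sphereBelow G g x).cliqueFinset 0 = {∅} := by
              ext s
              rw [SimpleGraph.mem_cliqueFinset_iff, SimpleGraph.isNClique_zero,
                Finset.mem_singleton]
            rw [this, Finset.card_singleton]
          have hstep : ∑ k ∈ Finset.range m, (-1 : ℝ) ^ (k + 1) *
              (((sphereBelow G g x).cliqueFinset (k + 1)).card : ℝ)
              = - ∑ k ∈ Finset.range m, (-1 : ℝ) ^ k *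
              (((sphereBelow G g x).cliqueFinset (k + 1)).card : ℝ) := by
            rw [← Finset.sum_neg_distrib]
            exact Finset.sum_congr rfl fun k _ => by ring
          rw [h0, eulerChar_eq_sum (sphereBelow G g x) (hcard x), hstep]
          push_cast
          rw [neg_add_eq_sub]
          norm_num
          congr!
end

section
/- For the cycle graph C_n with n ≥ 4 and any locally injective function g on its vertices, the identity 1 + n t + n t² = 1 + t·Σ_{x} f_{S_g(x)}(t) holds, where each vertex x is a local minimum with index polynomial 1, a local maximum with index polynomial 1+2t, or a regular point with index polynomial 1+t, and the number of local maxima equals the number of local minima. -/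
open Finset
open scoped Classical

/-- The cycle graph `C_n`, with vertex set `ZMod n`, `i` adjacent to `i ± 1`. -/
def cycleG (n : ℕ) : SimpleGraph (ZMod n) :=
  SimpleGraph.fromRel (fun a b => a = b + 1)

/-- `x` is a local minimum of `g` on `C_n`. -/
def IsLocalMin' (n : ℕ) (g : ZMod n → ℝ) (x : ZMod n) : Prop :=
  g x < g (x + 1) ∧ g x < g (x - 1)

/-- `x` is a local maximum of `g` on `C_n`. -/
def IsLocalMax' (n : ℕ) (g : ZMod n → ℝ) (x : ZMod n) : Prop :=
  g (x + 1) < g x ∧ g (x - 1) < g x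

lemma card_cliqueFinset_one' {V : Type*} [Fintype V] (G : SimpleGraph V) :
    (G.cliqueFinset 1).card = Fintype.card V := by
  have : G.cliqueFinset 1 = Finset.univ.image (fun a => {a}) := by
    ext s
    simp [SimpleGraph.mem_cliqueFinset_iff, SimpleGraph.isNClique_one, eq_comm]
  rw [this, Finset.card_image_of_injective _ (fun a b h => by simpa using h),
    Finset.card_univ]

lemma fPoly_card_zero' {V : Type*} [Fintype V] (G : SimpleGraph V) (t : ℝ)
    (h : Fintype.card V = 0) : fPoly G t = 1 := by
  simp [fPoly, h]

lemma fPoly_card_one' {V : Type*} [Fintype V] (G : SimpleGraph V) (t : ℝ)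
    (h : Fintype.card V = 1) : fPoly G t = 1 + t := by
  simp [fPoly, h, card_cliqueFinset_one']

lemma fPoly_card_two_bot' {V : Type*} [Fintype V] (G : SimpleGraph V) (t : ℝ)
    (h : Fintype.card V = 2) (hb : ∀ a b : V, ¬ G.Adj a b) : fPoly G t = 1 + 2 * t := by
  have hG : G = ⊥ := by ext a b; simp [hb]
  subst hG
  have h2 : ((⊥ : SimpleGraph V).cliqueFinset 2) = ∅ :=
    (SimpleGraph.cliqueFinset_eq_empty_iff).2 (SimpleGraph.cliqueFree_two.2 rfl)
  rw [fPoly, h]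
  rw [Finset.sum_range_succ, Finset.sum_range_one, card_cliqueFinset_one', h]
  norm_num [h2]

lemma zmod_natCast_ne' {n k : ℕ} [NeZero n] (hk : 0 < k) (hkn : k < n) : (k : ZMod n) ≠ 0 := by
  intro h
  have := Nat.le_of_dvd hk ((ZMod.natCast_eq_zero_iff k n).1 h)
  omega

lemma cycle_adj' {n : ℕ} (h1 : (1 : ZMod n) ≠ 0) (x y : ZMod n) :
    (cycleG n).Adj x y ↔ y = x - 1 ∨ y = x + 1 := by
  simp only [cycleG, SimpleGraph.fromRel_adj]
  constructor
  · rintro ⟨hne, h | h⟩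
    · left; rw [h]; ring
    · right; exact h
  · rintro (rfl | rfl)
    · exact ⟨fun hx => h1 (by linear_combination hx), Or.inl (by ring)⟩
    · exact ⟨fun hx => h1 (by linear_combination -hx), Or.inr rfl⟩

/-- Poincaré–Hopf on the cycle graph `C_n`, `n ≥ 4`: the identity
`1 + n t + n t² = 1 + t Σ_x f_{S_g(x)}(t)` holds, each vertex is a local minimum with
index polynomial `1`, a local maximum with index polynomial `1+2t`, or a regular point
with index polynomial `1+t`, and the numbers of local maxima and minima agree. -/
theorem cycle_poincare_hopf (n : ℕ) [NeZero n] (hn : 4 ≤ n) (g : ZMod n → ℝ)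
    (hg : ∀ ⦃a b : ZMod n⦄, (cycleG n).Adj a b → g a ≠ g b) (t : ℝ) :
    ((1 + n * t + n * t ^ 2 : ℝ) = 1 + t * ∑ x : ZMod n, fPoly (sphereBelow (cycleG n) g x) t)
    ∧ (∀ x : ZMod n,
        (IsLocalMin' n g x → fPoly (sphereBelow (cycleG n) g x) t = 1) ∧
        (IsLocalMax' n g x → fPoly (sphereBelow (cycleG n) g x) t = 1 + 2 * t) ∧
        (¬ IsLocalMin' n g x → ¬ IsLocalMax' n g x →
          fPoly (sphereBelow (cycleG n) g x) t = 1 + t))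
    ∧ (Finset.univ.filter (IsLocalMax' n g)).card
        = (Finset.univ.filter (IsLocalMin' n g)).card := by
  have h1 : (1 : ZMod n) ≠ 0 := by
    simpa using zmod_natCast_ne' (n := n) (k := 1) one_pos (by omega)
  have h3 : (3 : ZMod n) ≠ 0 := by
    simpa using zmod_natCast_ne' (n := n) (k := 3) (by norm_num) (by omega)
  have hadj := cycle_adj' h1
  have hax : ∀ x : ZMod n, (cycleG n).Adj x (x + 1) := fun x => (hadj x _).2 (Or.inr rfl)
  have hax' : ∀ x : ZMod n, (cycleG n).Adj x (x - 1) := fun x => (hadj x _).2 (Or.inl rfl)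
  have hne1 : ∀ x : ZMod n, g x ≠ g (x + 1) := fun x => hg (hax x)
  have hne2 : ∀ x : ZMod n, g x ≠ g (x - 1) := fun x => hg (hax' x)
  -- Part 2: per-vertex index polynomials
  have key : ∀ x : ZMod n,
      (IsLocalMin' n g x → fPoly (sphereBelow (cycleG n) g x) t = 1) ∧
      (IsLocalMax' n g x → fPoly (sphereBelow (cycleG n) g x) t = 1 + 2 * t) ∧
      (¬ IsLocalMin' n g x → ¬ IsLocalMax' n g x →
        fPoly (sphereBelow (cycleG n) g x) t = 1 + t) := by
    intro x
    refine ⟨?_, ?_, ?_⟩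
    · intro hx
      apply fPoly_card_zero'
      rw [Fintype.card_eq_zero_iff]
      constructor
      rintro ⟨y, hy1, hy2⟩
      rcases (hadj x y).1 hy1 with rfl | rfl
      · exact absurd hy2 (not_lt.2 hx.2.le)
      · exact absurd hy2 (not_lt.2 hx.1.le)
    · intro hx
      apply fPoly_card_two_bot'
      · rw [← Nat.card_eq_fintype_card, Nat.card_eq_two_iff]
        refine ⟨⟨x - 1, hax' x, hx.2⟩, ⟨x + 1, hax x, hx.1⟩, ?_, ?_⟩
        · intro h
          have h' : x - 1 = x + 1 := congrArg Subtype.val h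
          have : (2 : ZMod n) = 0 := by linear_combination -h'
          have h2 : (2 : ZMod n) ≠ 0 := by
            simpa using zmod_natCast_ne' (n := n) (k := 2) (by norm_num) (by omega)
          exact h2 this
        · apply Set.eq_univ_of_forall
          rintro ⟨y, hy1, hy2⟩
          simp only [Set.mem_insert_iff, Set.mem_singleton_iff]
          rcases (hadj x y).1 hy1 with rfl | rfl
          · left; rfl
          · right; rfl
      · rintro ⟨a, ha1, ha2⟩ ⟨b, hb1, hb2⟩ hab
        have hab' : (cycleG n).Adj a b := hab
        rcases (hadj x a).1 ha1 with rfl | rfl <;> rcases (hadj x b).1 hb1 with rfl | rfl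
        · exact hab'.ne rfl
        · rcases (hadj (x - 1) (x + 1)).1 hab' with h | h
          · exact h3 (by linear_combination h)
          · exact h1 (by linear_combination h)
        · rcases (hadj (x + 1) (x - 1)).1 hab' with h | h
          · exact h1 (by linear_combination -h)
          · exact h3 (by linear_combination -h)
        · exact hab'.ne rfl
    · intro hmin hmax
      apply fPoly_card_one'
      rw [Fintype.card_eq_one_iff]
      rcases lt_or_gt_of_ne (hne1 x) with hp | hp <;>
        rcases lt_or_gt_of_ne (hne2 x) with hq | hq
      · exact absurd ⟨hp, hq⟩ hmin
      · refine ⟨⟨x - 1, hax' x, hq⟩, ?_⟩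
        rintro ⟨y, hy1, hy2⟩
        rcases (hadj x y).1 hy1 with rfl | rfl
        · rfl
        · exact absurd hy2 (not_lt.2 hp.le)
      · refine ⟨⟨x + 1, hax x, hp⟩, ?_⟩
        rintro ⟨y, hy1, hy2⟩
        rcases (hadj x y).1 hy1 with rfl | rfl
        · exact absurd hy2 (not_lt.2 hq.le)
        · rfl
      · exact absurd ⟨hp, hq⟩ hmax
  -- Part 3: #max = #min
  have hsub : ∀ x : ZMod n, x - 1 + 1 = x := fun x => by ring
  have hminP : ∀ x : ZMod n,
      IsLocalMin' n g x ↔ (g x < g (x + 1) ∧ ¬ g (x - 1) < g (x - 1 + 1)) := by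
    intro x
    rw [hsub]
    unfold IsLocalMin'
    constructor
    · exact fun h => ⟨h.1, not_lt.2 h.2.le⟩
    · exact fun h => ⟨h.1, lt_of_le_of_ne (not_lt.1 h.2) (hne2 x)⟩
  have hmaxP : ∀ x : ZMod n,
      IsLocalMax' n g x ↔ (g (x - 1) < g (x - 1 + 1) ∧ ¬ g x < g (x + 1)) := by
    intro x
    rw [hsub]
    unfold IsLocalMax'
    constructor
    · exact fun h => ⟨h.2, not_lt.2 h.1.le⟩
    · exact fun h => ⟨lt_of_le_of_ne (not_lt.1 h.2) (hne1 x).symm, h.1⟩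
  set P : ZMod n → Prop := fun x => g x < g (x + 1) with hP
  have e1 : ((univ.filter P).filter (fun x => P (x - 1))).card
      + ((univ.filter P).filter (fun x => ¬ P (x - 1))).card = (univ.filter P).card :=
    Finset.card_filter_add_card_filter_not _
  have e2 : ((univ.filter (fun x => P (x - 1))).filter P).card
      + ((univ.filter (fun x => P (x - 1))).filter (fun x => ¬ P x)).card
      = (univ.filter (fun x : ZMod n => P (x - 1))).card :=
    Finset.card_filter_add_card_filter_not _
  have eswap : (univ.filter (fun x => P (x - 1))).filter P
      = (univ.filter P).filter (fun x => P (x - 1)) := by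
    rw [Finset.filter_filter, Finset.filter_filter]
    exact Finset.filter_congr fun x _ => and_comm
  have e3 : (univ.filter (fun x : ZMod n => P (x - 1))).card = (univ.filter P).card := by
    have himg : univ.filter (fun x : ZMod n => P (x - 1))
        = (univ.filter P).image (fun x => x + 1) := by
      ext y
      simp only [Finset.mem_image, Finset.mem_filter, Finset.mem_univ, true_and]
      constructor
      · intro h
        exact ⟨y - 1, h, hsub y⟩
      · rintro ⟨z, hz, rfl⟩
        simpa [show z + 1 - 1 = z from by ring] using hz
    rw [himg, Finset.card_image_of_injective _ (add_left_injective 1)]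
  have hmfilter : univ.filter (IsLocalMin' n g)
      = (univ.filter P).filter (fun x => ¬ P (x - 1)) := by
    rw [Finset.filter_filter]
    exact Finset.filter_congr fun x _ => hminP x
  have hMfilter : univ.filter (IsLocalMax' n g)
      = (univ.filter (fun x => P (x - 1))).filter (fun x => ¬ P x) := by
    rw [Finset.filter_filter]
    exact Finset.filter_congr fun x _ => hmaxP x
  have hcard : (univ.filter (IsLocalMax' n g)).card = (univ.filter (IsLocalMin' n g)).card := by
    rw [hmfilter, hMfilter]
    rw [eswap] at e2
    omega
  refine ⟨?_, key, hcard⟩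
  -- Part 1: the sum identity
  have hmaxnotmin : ∀ x : ZMod n, IsLocalMax' n g x → ¬ IsLocalMin' n g x :=
    fun x hx hmin => lt_asymm hx.1 hmin.1
  set F : ZMod n → ℝ := fun x => fPoly (sphereBelow (cycleG n) g x) t with hF
  have hsplit : ∑ x : ZMod n, F x
      = ∑ x ∈ univ.filter (IsLocalMin' n g), F x
        + (∑ x ∈ (univ.filter (fun x => ¬ IsLocalMin' n g x)).filter (IsLocalMax' n g), F x
        + ∑ x ∈ (univ.filter (fun x => ¬ IsLocalMin' n g x)).filter
            (fun x => ¬ IsLocalMax' n g x), F x) := by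
    rw [Finset.sum_filter_add_sum_filter_not, Finset.sum_filter_add_sum_filter_not]
  have hMeq : (univ.filter (fun x => ¬ IsLocalMin' n g x)).filter (IsLocalMax' n g)
      = univ.filter (IsLocalMax' n g) := by
    rw [Finset.filter_filter]
    exact Finset.filter_congr fun x _ => ⟨fun h => h.2, fun h => ⟨hmaxnotmin x h, h⟩⟩
  have hs1 : ∑ x ∈ univ.filter (IsLocalMin' n g), F x
      = (univ.filter (IsLocalMin' n g)).card * 1 := by
    rw [Finset.sum_congr rfl fun x hx => (key x).1 (Finset.mem_filter.1 hx).2]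
    simp
  have hs2 : ∑ x ∈ (univ.filter (fun x => ¬ IsLocalMin' n g x)).filter (IsLocalMax' n g), F x
      = (univ.filter (IsLocalMax' n g)).card * (1 + 2 * t) := by
    rw [hMeq, Finset.sum_congr rfl fun x hx => (key x).2.1 (Finset.mem_filter.1 hx).2]
    rw [Finset.sum_const, nsmul_eq_mul]
  have hs3 : ∑ x ∈ (univ.filter (fun x => ¬ IsLocalMin' n g x)).filter
      (fun x => ¬ IsLocalMax' n g x), F x
      = ((univ.filter (fun x => ¬ IsLocalMin' n g x)).filter
          (fun x => ¬ IsLocalMax' n g x)).card * (1 + t) := by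
    rw [Finset.sum_congr rfl fun x hx => by
      have h := Finset.mem_filter.1 hx
      exact (key x).2.2 (Finset.mem_filter.1 h.1).2 h.2]
    rw [Finset.sum_const, nsmul_eq_mul]
  -- counting
  have hc1 : (univ.filter (IsLocalMin' n g)).card
      + (univ.filter (fun x => ¬ IsLocalMin' n g x)).card = n := by
    rw [Finset.card_filter_add_card_filter_not, Finset.card_univ, ZMod.card]
  have hc2 : ((univ.filter (fun x => ¬ IsLocalMin' n g x)).filter (IsLocalMax' n g)).card
      + ((univ.filter (fun x => ¬ IsLocalMin' n g x)).filter
          (fun x => ¬ IsLocalMax' n g x)).card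
      = (univ.filter (fun x => ¬ IsLocalMin' n g x)).card :=
    Finset.card_filter_add_card_filter_not _
  rw [hMeq] at hc2
  rw [hsplit, hs1, hs2, hs3]
  have htot : ((univ.filter (IsLocalMin' n g)).card : ℝ)
      + (univ.filter (IsLocalMax' n g)).card
      + ((univ.filter (fun x => ¬ IsLocalMin' n g x)).filter
          (fun x => ¬ IsLocalMax' n g x)).card = n := by
    push_cast [← hc1, ← hc2]
    ring
  have hMm : ((univ.filter (IsLocalMax' n g)).card : ℝ)
      = (univ.filter (IsLocalMin' n g)).card := by exact_mod_cast hcard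
  linear_combination (-(t * (1 + t))) * htot - t ^ 2 * hMm
end

section
/- Let G=(V,E), H=(W,F) be finite simple graphs with locally injective functions g on V and h on W satisfying min(h) > max(g). Let (g,h) denote the combined function on the join G+H. Then for v ∈ V, the index polynomial satisfies i_{v,(g,h)}(t) = i_{v,g}(t), and for w ∈ W, i_{w,(g,h)}(t) = f_G(t)·i_{w,h}(t). -/
open Finset
open scoped Classical

/-- The join `G + H` of two graphs on disjoint vertex sets. -/
def joinG {V W : Type*} (G : SimpleGraph V) (H : SimpleGraph W) : SimpleGraph (V ⊕ W) where
  Adj a b := match a, b with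
    | .inl a, .inl b => G.Adj a b
    | .inr a, .inr b => H.Adj a b
    | _, _ => True
  symm := ⟨by rintro (a | a) (b | b) h <;> first | exact h.symm | trivial⟩
  loopless := ⟨by rintro (a | a) h <;> exact SimpleGraph.irrefl _ h⟩

/-- Auxiliary: the sum of `t^|s|` over all cliques `s` (including the empty set). -/
noncomputable def cliquePoly {V : Type*} [Fintype V] (G : SimpleGraph V) (t : ℝ) : ℝ :=
  ∑ s ∈ Finset.univ.filter (fun s : Finset V => G.IsClique s), t ^ s.card

lemma fPoly_eq_cliquePoly {V : Type*} [Fintype V] (G : SimpleGraph V) (t : ℝ) :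
    fPoly G t = cliquePoly G t := by
  classical
  unfold fPoly cliquePoly
  rw [← Finset.sum_fiberwise_of_maps_to (g := fun s : Finset V => s.card)
      (t := Finset.range (Fintype.card V + 1))
      (fun s _ => Finset.mem_range.mpr (Nat.lt_succ_of_le (Finset.card_le_univ s)))]
  rw [Finset.sum_range_succ']
  have h0 : (Finset.univ.filter (fun s : Finset V => G.IsClique s)).filter
      (fun s => s.card = 0) = {∅} := by
    ext s
    simp only [Finset.mem_filter, Finset.mem_univ, true_and, Finset.card_eq_zero,
      Finset.mem_singleton]
    constructor
    · rintro ⟨_, h⟩; exact h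
    · rintro rfl; simp [SimpleGraph.IsClique]
  have hk : ∀ k : ℕ, (Finset.univ.filter (fun s : Finset V => G.IsClique s)).filter
      (fun s => s.card = k + 1) = G.cliqueFinset (k + 1) := by
    intro k
    ext s
    simp only [Finset.mem_filter, Finset.mem_univ, true_and,
      SimpleGraph.mem_cliqueFinset_iff, SimpleGraph.isNClique_iff]
  rw [h0, add_comm]
  congr 1
  · apply Finset.sum_congr rfl
    intro k _
    rw [Finset.sum_congr (hk k) (fun s hs => by
      rw [(SimpleGraph.mem_cliqueFinset_iff.mp hs).2]),
      Finset.sum_const, nsmul_eq_mul]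
  · rw [Finset.sum_singleton, Finset.card_empty, pow_zero]

lemma cliquePoly_iso {V W : Type*} [Fintype V] [Fintype W] {G : SimpleGraph V}
    {G' : SimpleGraph W} (e : G ≃g G') (t : ℝ) : cliquePoly G t = cliquePoly G' t := by
  classical
  unfold cliquePoly
  apply Finset.sum_equiv e.toEquiv.finsetCongr
  · intro s
    simp only [Finset.mem_filter, Finset.mem_univ, true_and, Equiv.finsetCongr_apply]
    constructor
    · intro hs a ha b hb hab
      simp only [Finset.coe_map, Set.mem_image, Finset.mem_coe] at ha hb
      obtain ⟨a, ha, rfl⟩ := ha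
      obtain ⟨b, hb, rfl⟩ := hb
      exact e.map_adj_iff.mpr (hs ha hb (fun hc => hab (by rw [hc])))
    · intro hs a ha b hb hab
      have : G'.Adj (e a) (e b) := hs
        (by simp only [Finset.coe_map, Set.mem_image, Finset.mem_coe]; exact ⟨a, ha, rfl⟩)
        (by simp only [Finset.coe_map, Set.mem_image, Finset.mem_coe]; exact ⟨b, hb, rfl⟩)
        (fun hc => hab (e.toEquiv.injective hc))
      exact e.map_adj_iff.mp this
  · intro s _
    simp

lemma joinG_isClique_iff {V W : Type*} (G : SimpleGraph V) (H : SimpleGraph W)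
    (u : Finset (V ⊕ W)) :
    (joinG G H).IsClique u ↔ G.IsClique u.toLeft ∧ H.IsClique u.toRight := by
  classical
  constructor
  · intro hu
    constructor
    · intro a ha b hb hab
      have := hu (Finset.mem_coe.mpr (Finset.mem_toLeft.mp (Finset.mem_coe.mp ha)))
        (Finset.mem_coe.mpr (Finset.mem_toLeft.mp (Finset.mem_coe.mp hb)))
        (fun hc => hab (Sum.inl_injective hc))
      exact this
    · intro a ha b hb hab
      have := hu (Finset.mem_coe.mpr (Finset.mem_toRight.mp (Finset.mem_coe.mp ha)))
        (Finset.mem_coe.mpr (Finset.mem_toRight.mp (Finset.mem_coe.mp hb)))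
        (fun hc => hab (Sum.inr_injective hc))
      exact this
  · rintro ⟨h1, h2⟩ x hx y hy hxy
    match x, y with
    | .inl a, .inl b =>
      exact h1 (Finset.mem_coe.mpr (Finset.mem_toLeft.mpr (Finset.mem_coe.mp hx)))
        (Finset.mem_coe.mpr (Finset.mem_toLeft.mpr (Finset.mem_coe.mp hy)))
        (fun hc => hxy (by rw [hc]))
    | .inl a, .inr b => trivial
    | .inr a, .inl b => trivial
    | .inr a, .inr b =>
      exact h2 (Finset.mem_coe.mpr (Finset.mem_toRight.mpr (Finset.mem_coe.mp hx)))
        (Finset.mem_coe.mpr (Finset.mem_toRight.mpr (Finset.mem_coe.mp hy)))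
        (fun hc => hxy (by rw [hc]))

lemma cliquePoly_join {V W : Type*} [Fintype V] [Fintype W] (G : SimpleGraph V)
    (H : SimpleGraph W) (t : ℝ) :
    cliquePoly (joinG G H) t = cliquePoly G t * cliquePoly H t := by
  classical
  unfold cliquePoly
  rw [Finset.sum_mul_sum, ← Finset.sum_product']
  apply Finset.sum_nbij' (fun u : Finset (V ⊕ W) => (u.toLeft, u.toRight))
    (fun p : Finset V × Finset W => p.1.disjSum p.2)
  · intro u hu
    simp only [Finset.mem_filter, Finset.mem_univ, true_and] at hu ⊢
    rw [Finset.mem_product]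
    have := (joinG_isClique_iff G H u).mp hu
    simpa using this
  · intro p hp
    simp only [Finset.mem_filter, Finset.mem_univ, true_and, Finset.mem_product] at hp ⊢
    rw [joinG_isClique_iff]
    simpa using hp
  · intro u _
    exact Finset.toLeft_disjSum_toRight
  · intro p _
    simp
  · intro u _
    rw [← pow_add, Finset.card_toLeft_add_card_toRight]

/-- The sphere of `inl v` in the join is isomorphic to the sphere of `v` in `G`. -/
def isoInl {V W : Type*} (G : SimpleGraph V) (H : SimpleGraph W) (g : V → ℝ) (h : W → ℝ)
    (hlt : ∀ (v : V) (w : W), g v < h w) (v : V) :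
    sphereBelow G g v ≃g sphereBelow (joinG G H) (Sum.elim g h) (Sum.inl v) where
  toFun := fun y => ⟨Sum.inl y.1, ⟨y.2.1, y.2.2⟩⟩
  invFun := fun x => match x with
    | ⟨.inl y, hx⟩ => ⟨y, hx⟩
    | ⟨.inr z, hx⟩ => absurd hx.2 (not_lt.mpr (hlt v z).le)
  left_inv := by rintro ⟨y, hy⟩; rfl
  right_inv := by
    rintro ⟨(y | z), hx⟩
    · rfl
    · exact absurd hx.2 (not_lt.mpr (hlt v z).le)
  map_rel_iff' := by intro a b; exact Iff.rfl

/-- The sphere of `inr w` in the join is isomorphic to the join of `G` with the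
sphere of `w` in `H`. -/
def isoInr {V W : Type*} (G : SimpleGraph V) (H : SimpleGraph W) (g : V → ℝ) (h : W → ℝ)
    (hlt : ∀ (v : V) (w : W), g v < h w) (w : W) :
    joinG G (sphereBelow H h w) ≃g sphereBelow (joinG G H) (Sum.elim g h) (Sum.inr w) where
  toFun := fun x => match x with
    | .inl v => ⟨.inl v, ⟨trivial, hlt v w⟩⟩
    | .inr y => ⟨.inr y.1, ⟨y.2.1, y.2.2⟩⟩
  invFun := fun x => match x with
    | ⟨.inl v, _⟩ => .inl v
    | ⟨.inr y, hx⟩ => .inr ⟨y, hx⟩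
  left_inv := by rintro (v | ⟨y, hy⟩) <;> rfl
  right_inv := by rintro ⟨(v | y), hx⟩ <;> rfl
  map_rel_iff' := by rintro (a | ⟨a, ha⟩) (b | ⟨b, hb⟩) <;> exact Iff.rfl

/-- If `min h > max g`, the index polynomials of the combined function `(g,h)` on the
join `G + H` satisfy `i_{v,(g,h)}(t) = i_{v,g}(t)` for `v ∈ V` and
`i_{w,(g,h)}(t) = f_G(t)·i_{w,h}(t)` for `w ∈ W`. -/
theorem join_index_polynomials {V W : Type*} [Fintype V] [Fintype W]
    (G : SimpleGraph V) (H : SimpleGraph W) (g : V → ℝ) (h : W → ℝ)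
    (hgl : ∀ ⦃a b : V⦄, G.Adj a b → g a ≠ g b)
    (hhl : ∀ ⦃a b : W⦄, H.Adj a b → h a ≠ h b)
    (hlt : ∀ (v : V) (w : W), g v < h w) (t : ℝ) :
    (∀ v : V, fPoly (sphereBelow (joinG G H) (Sum.elim g h) (Sum.inl v)) t
        = fPoly (sphereBelow G g v) t)
    ∧ (∀ w : W, fPoly (sphereBelow (joinG G H) (Sum.elim g h) (Sum.inr w)) t
        = fPoly G t * fPoly (sphereBelow H h w) t) := by
  constructor
  · intro v
    rw [fPoly_eq_cliquePoly, fPoly_eq_cliquePoly,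
      ← cliquePoly_iso (isoInl G H g h hlt v) t]
  · intro w
    rw [fPoly_eq_cliquePoly, fPoly_eq_cliquePoly, fPoly_eq_cliquePoly,
      ← cliquePoly_iso (isoInr G H g h hlt w) t, cliquePoly_join]
end

section
/- Gauss-Bonnet from index expectation: Let G=(V,E) be a finite simple graph and let g be a random function on V with i.i.d. uniform values in [0,1]. Then for each vertex x and each k ≥ 0, the expected number of k-dimensional cliques in S_g(x) equals f_k(S(x))/(k+1), and consequently E[t·f_{S_g(x)}(t)] = F_{S(x)}(t), where F is the antiderivative of f with F(0)=0. -/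
open Finset MeasureTheory
open scoped Classical ENNReal

/-- The antiderivative `F_G(t) = ∫₀ᵗ f_G(s) ds = t + Σ_k f_k t^{k+2}/(k+2)`. -/
noncomputable def FPoly {V : Type*} [Fintype V] (G : SimpleGraph V) (t : ℝ) : ℝ :=
  t + ∑ k ∈ Finset.range (Fintype.card V),
    ((G.cliqueFinset (k + 1)).card : ℝ) * t ^ (k + 2) / (k + 2)

/-- The unit sphere `S(x)`: the induced subgraph on the neighbors of `x`. -/
def unitSphere {V : Type*} (G : SimpleGraph V) (x : V) : SimpleGraph (G.neighborSet x) :=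
  G.induce (G.neighborSet x)




noncomputable abbrev mu0 : Measure ℝ := volume.restrict (Set.Icc 0 1)

instance : IsProbabilityMeasure mu0 := ⟨by simp [Real.volume_Icc]⟩

lemma mu0_Iio {c : ℝ} (hc : c ∈ Set.Icc (0:ℝ) 1) : mu0 (Set.Iio c) = ENNReal.ofReal c := by
  rw [Measure.restrict_apply measurableSet_Iio]
  have : Set.Iio c ∩ Set.Icc (0:ℝ) 1 = Set.Ico 0 c := by
    ext z
    simp only [Set.mem_inter_iff, Set.mem_Iio, Set.mem_Icc, Set.mem_Ico]
    constructor
    · rintro ⟨h1, h2, h3⟩; exact ⟨h2, h1⟩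
    · rintro ⟨h1, h2⟩; exact ⟨h2, h1, by linarith [hc.2]⟩
  rw [this, Real.volume_Ico, sub_zero]

lemma mu0_pow_integral (n : ℕ) :
    ∫⁻ c, (mu0 (Set.Iio c)) ^ n ∂mu0 = ENNReal.ofReal (1 / (n + 1)) := by
  have h1 : ∫⁻ c, (mu0 (Set.Iio c)) ^ n ∂mu0 = ∫⁻ c, ENNReal.ofReal (c ^ n) ∂mu0 := by
    refine lintegral_congr_ae (((ae_restrict_mem measurableSet_Icc)).mono fun c hc => ?_)
    show mu0 (Set.Iio c) ^ n = ENNReal.ofReal (c ^ n)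
    rw [mu0_Iio hc, ← ENNReal.ofReal_pow hc.1]
  rw [h1, ← ofReal_integral_eq_lintegral_ofReal]
  · congr 1
    rw [show (mu0 : Measure ℝ) = volume.restrict (Set.Icc 0 1) from rfl,
      MeasureTheory.integral_Icc_eq_integral_Ioc,
      ← intervalIntegral.integral_of_le (zero_le_one), integral_pow]
    simp
  · exact (continuous_pow n).integrableOn_Icc
  · exact (ae_restrict_mem measurableSet_Icc).mono fun c hc => pow_nonneg hc.1 n

lemma prob_below {V : Type*} [Fintype V] (x : V) (t : Finset V) (hx : x ∉ t) :
    Measure.pi (fun _ : V => mu0) {g : V → ℝ | ∀ y ∈ t, g y < g x}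
      = ENNReal.ofReal (1 / (t.card + 1)) := by
  letI : Unique {i : V // i = x} := ⟨⟨⟨x, rfl⟩⟩, by rintro ⟨y, rfl⟩; rfl⟩
  set p : V → Prop := fun i => i = x with hp
  let T := MeasurableEquiv.piEquivPiSubtypeProd (fun _ : V => ℝ) p
  have hT := measurePreserving_piEquivPiSubtypeProd (fun _ : V => mu0) p
  set B : Set ((∀ _ : {i // p i}, ℝ) × (∀ _ : {i // ¬ p i}, ℝ)) :=
    {ab | ∀ y : {i // ¬ p i}, ↑y ∈ t → ab.2 y < ab.1 ⟨x, rfl⟩} with hB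
  have hBm : MeasurableSet B := by
    have : B = ⋂ (y : {i // ¬ p i}) (_ : ↑y ∈ t),
        {ab : (∀ _ : {i // p i}, ℝ) × (∀ _ : {i // ¬ p i}, ℝ) | ab.2 y < ab.1 ⟨x, rfl⟩} := by
      ext ab; simp [hB]
    rw [this]
    exact MeasurableSet.iInter fun y => MeasurableSet.iInter fun _ =>
      measurableSet_lt (measurable_snd.eval) (measurable_fst.eval)
  have hA : {g : V → ℝ | ∀ y ∈ t, g y < g x} = T ⁻¹' B := by
    ext g
    simp only [Set.mem_setOf_eq, Set.mem_preimage, hB, T,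
      MeasurableEquiv.piEquivPiSubtypeProd, Equiv.piEquivPiSubtypeProd,
      MeasurableEquiv.coe_mk, Equiv.coe_fn_mk]
    constructor
    · intro h y hy; exact h _ hy
    · intro h y hy
      have hyx : ¬ p y := fun h' => hx (h' ▸ hy)
      exact h ⟨y, hyx⟩ hy
  rw [hA, hT.measure_preimage hBm.nullMeasurableSet, Measure.prod_apply hBm]
  have hslice : ∀ a : (∀ _ : {i // p i}, ℝ),
      (Prod.mk a ⁻¹' B) = Set.pi Set.univ
        (fun y : {i // ¬ p i} => if ↑y ∈ t then Set.Iio (a ⟨x, rfl⟩) else Set.univ) := by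
    intro a
    ext b
    simp only [Set.mem_preimage, hB, Set.mem_setOf_eq, Set.mem_pi, Set.mem_univ, true_implies]
    refine forall_congr' fun y => ?_
    by_cases hy : (↑y : V) ∈ t <;> simp [hy]
  have hcard : (Finset.univ.filter (fun y : {i // ¬ p i} => ↑y ∈ t)).card = t.card := by
    apply Finset.card_nbij (fun y => ↑y)
    · intro y hy; simpa using (Finset.mem_filter.mp hy).2
    · intro y hy z hz h; exact Subtype.ext h
    · intro y hy
      have hyx : ¬ p y := fun h' => hx (h' ▸ hy)
      exact ⟨⟨y, hyx⟩, by simpa using hy, rfl⟩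
  have hmeas : ∀ a : (∀ _ : {i // p i}, ℝ),
      Measure.pi (fun _ : {i // ¬ p i} => mu0) (Prod.mk a ⁻¹' B)
        = (mu0 (Set.Iio (a ⟨x, rfl⟩))) ^ t.card := by
    intro a
    rw [hslice a, Measure.pi_pi]
    rw [show (fun y : {i // ¬ p i} => mu0 (if ↑y ∈ t then Set.Iio (a ⟨x, rfl⟩) else Set.univ))
        = fun y : {i // ¬ p i} => if ↑y ∈ t then mu0 (Set.Iio (a ⟨x, rfl⟩)) else 1 from
      funext fun y => by by_cases hy : (↑y : V) ∈ t <;> simp [hy]]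
    rw [Finset.prod_ite, Finset.prod_const, Finset.prod_const, one_pow, mul_one, hcard]
  simp_rw [hmeas]
  have hFm : Measurable (fun c : ℝ => (mu0 (Set.Iio c)) ^ t.card) :=
    (Monotone.measurable (fun c d hcd => measure_mono (Set.Iio_subset_Iio hcd))).pow_const _
  have key := (measurePreserving_funUnique mu0 {i // p i}).lintegral_comp hFm
  rw [mu0_pow_integral] at key
  have hpi : (@Measure.pi (Subtype p) (fun _ => ℝ) (Subtype.fintype p) _ (fun _ => mu0))
      = (@Measure.pi (Subtype p) (fun _ => ℝ) Unique.fintype _ (fun _ => mu0)) := by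
    congr!
  rw [hpi]
  simp only [MeasurableEquiv.funUnique, MeasurableEquiv.coe_mk, Equiv.funUnique,
    MeasurableEquiv.piUnique, Equiv.piUnique, Equiv.coe_fn_mk] at key
  have e : (⟨x, rfl⟩ : Subtype p) = default := Unique.eq_default _
  simp only [e]
  exact key

lemma card_cliqueFinset_induce {V : Type*} [Fintype V] (G : SimpleGraph V) (S : Set V) (n : ℕ) :
    ((G.induce S).cliqueFinset n).card
      = ((G.cliqueFinset n).filter (fun t => ∀ y ∈ t, y ∈ S)).card := by
  apply Finset.card_nbij (fun c => c.map (Function.Embedding.subtype _))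
  · intro c hc
    rw [Finset.mem_coe, SimpleGraph.mem_cliqueFinset_iff] at hc
    rw [Finset.mem_coe, Finset.mem_filter, SimpleGraph.mem_cliqueFinset_iff]
    refine ⟨⟨?_, by simpa using hc.card_eq⟩, ?_⟩
    · intro a ha b hb hab
      simp only [Finset.coe_map, Set.mem_image, Finset.mem_coe] at ha hb
      obtain ⟨a', ha', rfl⟩ := ha
      obtain ⟨b', hb', rfl⟩ := hb
      have hne : a' ≠ b' := fun h => hab (congrArg Subtype.val h)
      have := hc.isClique ha' hb' hne
      simpa using this
    · intro y hy
      simp only [Finset.mem_map, Function.Embedding.coe_subtype] at hy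
      obtain ⟨y', _, rfl⟩ := hy
      exact y'.2
  · intro c _ d _ h
    exact Finset.map_injective _ h
  · intro u hu
    simp only [Finset.mem_coe, Finset.mem_filter, SimpleGraph.mem_cliqueFinset_iff] at hu
    obtain ⟨hclique, hsub⟩ := hu
    refine ⟨u.subtype (· ∈ S), ?_, ?_⟩
    · simp only [Finset.mem_coe, SimpleGraph.mem_cliqueFinset_iff]
      constructor
      · intro a ha b hb hab
        rw [Finset.mem_coe, Finset.mem_subtype] at ha hb
        have := hclique.isClique ha hb (fun h => hab (Subtype.ext h))
        simpa using this
      · rw [Finset.card_subtype, Finset.filter_true_of_mem hsub, hclique.card_eq]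
    · show (u.subtype (· ∈ S)).map (Function.Embedding.subtype _) = u
      rw [Finset.subtype_map, Finset.filter_true_of_mem hsub]


section Count
variable {V : Type*} [Fintype V] (G : SimpleGraph V) (x : V)

lemma meas_A (u : Finset V) : MeasurableSet {g : V → ℝ | ∀ y ∈ u, g y < g x} := by
  have : {g : V → ℝ | ∀ y ∈ u, g y < g x} = ⋂ y ∈ u, {g : V → ℝ | g y < g x} := by
    ext g; simp
  rw [this]
  exact MeasurableSet.biInter u.countable_toSet fun y _ =>
    measurableSet_lt (measurable_pi_apply y) (measurable_pi_apply x)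

lemma count_unit (n : ℕ) : (((unitSphere G x).cliqueFinset n).card : ℕ)
    = ((G.cliqueFinset n).filter (fun u => ∀ y ∈ u, G.Adj x y)).card := by
  unfold unitSphere
  convert card_cliqueFinset_induce G (G.neighborSet x) n
  rfl

lemma count_eq (g : V → ℝ) (n : ℕ) :
    (((sphereBelow G g x).cliqueFinset n).card : ℝ)
      = ∑ u ∈ (G.cliqueFinset n).filter (fun u => ∀ y ∈ u, G.Adj x y),
          Set.indicator {g' : V → ℝ | ∀ y ∈ u, g' y < g' x} (fun _ => (1:ℝ)) g := by
  unfold sphereBelow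
  refine (congrArg (Nat.cast (R := ℝ)) (?_ : _ =
    ((G.cliqueFinset n).filter (fun t => ∀ y ∈ t, y ∈ sphereSet G g x)).card)).trans ?_
  · convert card_cliqueFinset_induce G (sphereSet G g x) n
  have h1 : (G.cliqueFinset n).filter (fun u => ∀ y ∈ u, y ∈ sphereSet G g x)
      = ((G.cliqueFinset n).filter (fun u => ∀ y ∈ u, G.Adj x y)).filter
          (fun u => ∀ y ∈ u, g y < g x) := by
    rw [Finset.filter_filter]
    apply Finset.filter_congr
    intro u _
    constructor
    · intro h
      exact ⟨fun y hy => (h y hy).1, fun y hy => (h y hy).2⟩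
    · intro h y hy
      exact ⟨h.1 y hy, h.2 y hy⟩
  rw [h1, Finset.card_filter]
  push_cast
  apply Finset.sum_congr rfl
  intro u _
  by_cases h : ∀ y ∈ u, g y < g x <;>
    simp [Set.indicator_apply, Set.mem_setOf_eq, h]

lemma integrable_count (n : ℕ) :
    Integrable (fun g : V → ℝ => (((sphereBelow G g x).cliqueFinset n).card : ℝ))
      (Measure.pi fun _ : V => mu0) := by
  have hrw : (fun g : V → ℝ => (((sphereBelow G g x).cliqueFinset n).card : ℝ))
      = fun g => ∑ u ∈ (G.cliqueFinset n).filter (fun u => ∀ y ∈ u, G.Adj x y),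
          Set.indicator {g' : V → ℝ | ∀ y ∈ u, g' y < g' x} (fun _ => (1:ℝ)) g :=
    funext fun g => count_eq G x g n
  rw [hrw]
  apply integrable_finset_sum
  intro u _
  exact (integrable_indicator_iff (meas_A x u)).2
    (integrableOn_const (measure_ne_top _ _))

lemma integral_count (k : ℕ) :
    ∫ g : V → ℝ, (((sphereBelow G g x).cliqueFinset (k + 1)).card : ℝ)
        ∂(Measure.pi fun _ : V => mu0)
      = (((unitSphere G x).cliqueFinset (k + 1)).card : ℝ) / (k + 2) := by
  have hrw : (fun g : V → ℝ => (((sphereBelow G g x).cliqueFinset (k + 1)).card : ℝ))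
      = fun g => ∑ u ∈ (G.cliqueFinset (k + 1)).filter (fun u => ∀ y ∈ u, G.Adj x y),
          Set.indicator {g' : V → ℝ | ∀ y ∈ u, g' y < g' x} (fun _ => (1:ℝ)) g :=
    funext fun g => count_eq G x g (k + 1)
  rw [hrw, integral_finset_sum _ (fun u _ => (integrable_indicator_iff (meas_A x u)).2
    (integrableOn_const (measure_ne_top _ _)))]
  have hterm : ∀ u ∈ (G.cliqueFinset (k + 1)).filter (fun u => ∀ y ∈ u, G.Adj x y),
      ∫ g : V → ℝ, Set.indicator {g' : V → ℝ | ∀ y ∈ u, g' y < g' x} (fun _ => (1:ℝ)) g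
          ∂(Measure.pi fun _ : V => mu0) = 1 / (k + 2) := by
    intro u hu
    rw [Finset.mem_filter, SimpleGraph.mem_cliqueFinset_iff] at hu
    have hxu : x ∉ u := fun hxin => G.irrefl (hu.2 x hxin)
    have hcard : u.card = k + 1 := hu.1.card_eq
    rw [MeasureTheory.integral_indicator_const (1:ℝ) (meas_A x u), smul_eq_mul, mul_one,
      measureReal_def, prob_below x u hxu, ENNReal.toReal_ofReal (by positivity), hcard]
    push_cast
    ring
  rw [Finset.sum_congr rfl hterm, Finset.sum_const, count_unit, nsmul_eq_mul]
  ring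

end Count

lemma cliqueFinset_empty_of_lt {W : Type*} [Fintype W] (H : SimpleGraph W) {n : ℕ}
    (h : Fintype.card W < n) : H.cliqueFinset n = ∅ := by
  rw [Finset.eq_empty_iff_forall_notMem]
  intro s hs
  rw [SimpleGraph.mem_cliqueFinset_iff] at hs
  have h1 := hs.card_eq
  have h2 := Finset.card_le_univ s
  omega

lemma mul_fPoly_eq {W : Type*} [Fintype W] (H : SimpleGraph W) {m : ℕ}
    (hm : Fintype.card W ≤ m) (t : ℝ) :
    t * fPoly H t = t + ∑ k ∈ Finset.range m,
      ((H.cliqueFinset (k + 1)).card : ℝ) * t ^ (k + 2) := by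
  unfold fPoly
  rw [mul_add, mul_one, Finset.mul_sum]
  congr 1
  rw [Finset.sum_subset (Finset.range_subset_range.2 hm) (fun k _ hk => by
    rw [cliqueFinset_empty_of_lt H (by simp only [Finset.mem_range, not_lt] at hk; omega)]
    simp)]
  exact Finset.sum_congr rfl fun k _ => by ring

lemma FPoly_eq {W : Type*} [Fintype W] (H : SimpleGraph W) {m : ℕ}
    (hm : Fintype.card W ≤ m) (t : ℝ) :
    FPoly H t = t + ∑ k ∈ Finset.range m,
      ((H.cliqueFinset (k + 1)).card : ℝ) * t ^ (k + 2) / (k + 2) := by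
  unfold FPoly
  congr 1
  rw [Finset.sum_subset (Finset.range_subset_range.2 hm) (fun k _ hk => by
    rw [cliqueFinset_empty_of_lt H (by simp only [Finset.mem_range, not_lt] at hk; omega)]
    simp)]

lemma card_cf_irrel {W : Type*} (H : SimpleGraph W) (n : ℕ)
    {i1 i1' : Fintype W} {i2 i2' : DecidableEq W} {i3 i3' : DecidableRel H.Adj} :
    (@SimpleGraph.cliqueFinset W H i1 i2 i3 n).card
      = (@SimpleGraph.cliqueFinset W H i1' i2' i3' n).card := by
  obtain rfl : i1 = i1' := Subsingleton.elim _ _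
  obtain rfl : i2 = i2' := Subsingleton.elim _ _
  obtain rfl : i3 = i3' := Subsingleton.elim _ _
  rfl

lemma part_two {V : Type*} [Fintype V] (G : SimpleGraph V) (x : V) (r : ℝ) :
    ∫ g : V → ℝ, r * fPoly (sphereBelow G g x) r ∂(Measure.pi fun _ : V => mu0)
      = FPoly (unitSphere G x) r := by
  have hrw : (fun g : V → ℝ => r * fPoly (sphereBelow G g x) r)
      = fun g => r + ∑ k ∈ Finset.range (Fintype.card V),
          (((sphereBelow G g x).cliqueFinset (k + 1)).card : ℝ) * r ^ (k + 2) := by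
    funext g
    rw [mul_fPoly_eq _ (m := Fintype.card V)
      (by exact Fintype.card_le_of_injective Subtype.val Subtype.val_injective) r]
    exact congrArg (r + ·) (Finset.sum_congr rfl fun k _ =>
      congrArg (fun m : ℕ => (m : ℝ) * r ^ (k + 2)) (card_cf_irrel _ _))
  have hF : FPoly (unitSphere G x) r = r + ∑ k ∈ Finset.range (Fintype.card V),
      (((unitSphere G x).cliqueFinset (k + 1)).card : ℝ) * r ^ (k + 2) / (k + 2) := by
    rw [FPoly_eq _ (m := Fintype.card V)
      (by exact Fintype.card_le_of_injective Subtype.val Subtype.val_injective) r]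
    exact congrArg (r + ·) (Finset.sum_congr rfl fun k _ =>
      congrArg (fun m : ℕ => (m : ℝ) * r ^ (k + 2) / (k + 2)) (card_cf_irrel _ _))
  rw [hrw, hF]
  have hint : ∀ k ∈ Finset.range (Fintype.card V), Integrable
      (fun g : V → ℝ => (((sphereBelow G g x).cliqueFinset (k + 1)).card : ℝ) * r ^ (k + 2))
      (Measure.pi fun _ : V => mu0) :=
    fun k _ => (integrable_count G x (k + 1)).mul_const _
  rw [integral_add (integrable_const r) (integrable_finset_sum _ hint), integral_const,
    integral_finset_sum _ hint]
  have hterm : ∀ k ∈ Finset.range (Fintype.card V),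
      ∫ g : V → ℝ, (((sphereBelow G g x).cliqueFinset (k + 1)).card : ℝ) * r ^ (k + 2)
          ∂(Measure.pi fun _ : V => mu0)
        = (((unitSphere G x).cliqueFinset (k + 1)).card : ℝ) / (k + 2) * r ^ (k + 2) :=
    fun k _ => by rw [MeasureTheory.integral_mul_const, integral_count G x k]
  rw [Finset.sum_congr rfl hterm]
  simp only [probReal_univ, ENNReal.toReal_one, smul_eq_mul, one_mul]
  congr 1
  exact Finset.sum_congr rfl fun k _ => by ring

/-- Index expectation with i.i.d. uniform values on `[0,1]`: the expected number of cliques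
of `S_g(x)` on `k+1` vertices (i.e. `k`-dimensional cliques) is `f_k(S(x))/(k+2)` — since
`g(x)` is the maximum of the `k+2` i.i.d. values on the clique together with `x` with
probability `1/(k+2)` — and consequently `E[t·f_{S_g(x)}(t)] = F_{S(x)}(t)`. -/
theorem index_expectation_uniform {V : Type*} [Fintype V] (G : SimpleGraph V) :
    let μ : Measure (V → ℝ) :=
      Measure.pi (fun _ : V => volume.restrict (Set.Icc (0 : ℝ) 1))
    ∀ x : V,
      (∀ k : ℕ,
        ∫ g : V → ℝ, (((sphereBelow G g x).cliqueFinset (k + 1)).card : ℝ) ∂μ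
          = (((unitSphere G x).cliqueFinset (k + 1)).card : ℝ) / (k + 2))
      ∧ (∀ t : ℝ,
        ∫ g : V → ℝ, t * fPoly (sphereBelow G g x) t ∂μ = FPoly (unitSphere G x) t) := by
  intro μ x
  exact ⟨fun k => integral_count G x k, fun t => part_two G x t⟩
end

section
/- Gauss-Bonnet for Euler characteristic: for any finite simple graph G, χ(G) = Σ_{x∈V} K(x), where K(x) = Σ_{k=0}^{d} (-1)^k f_{k-1}(S(x))/(k+1), with the convention f_{-1} = 1. -/
open Finset
open scoped Classical

/-- The curvature `K(x) = Σ_{k≥0} (-1)^k f_{k-1}(S(x))/(k+1)` with `f_{-1} = 1`;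
here `f_{k-1}(S(x))` is the number of cliques of `S(x)` on `k` vertices, and the `k = 0`
term is `(G.cliqueFinset 0).card = 1` (the empty clique). -/
noncomputable def curvature {V : Type*} [Fintype V] (G : SimpleGraph V) (x : V) : ℝ :=
  ∑ k ∈ Finset.range (Fintype.card V + 1),
    (-1 : ℝ) ^ k * (((unitSphere G x).cliqueFinset k).card : ℝ) / (k + 1)

/-- Cliques of the unit sphere at `x` correspond to cliques of `G` containing `x`. -/
lemma sphere_clique_card {V : Type*} [Fintype V] (G : SimpleGraph V) (x : V) (k : ℕ) :
    ((unitSphere G x).cliqueFinset k).card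
      = ((G.cliqueFinset (k + 1)).filter (fun t => x ∈ t)).card := by
  apply Finset.card_bij (fun s _ => insert x (s.map (Function.Embedding.subtype _)))
  · -- maps into
    intro s hs
    rw [SimpleGraph.mem_cliqueFinset_iff] at hs
    have hxnot : x ∉ s.map (Function.Embedding.subtype _) := by
      intro hx
      rcases Finset.mem_map.1 hx with ⟨u, _, hu⟩
      have : (u : V) ∈ G.neighborSet x := u.2
      simp only [Function.Embedding.coe_subtype] at hu
      rw [hu] at this
      exact G.irrefl this
    have hclique : G.IsNClique k (s.map (Function.Embedding.subtype _)) := by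
      constructor
      · intro a ha b hb hab
        rcases Finset.mem_map.1 (by exact_mod_cast ha) with ⟨u, hu, rfl⟩
        rcases Finset.mem_map.1 (by exact_mod_cast hb) with ⟨v, hv, rfl⟩
        have huv : u ≠ v := fun h => hab (by rw [h])
        exact hs.1 hu hv huv
      · rw [Finset.card_map, hs.2]
    rw [Finset.mem_filter, SimpleGraph.mem_cliqueFinset_iff]
    refine ⟨hclique.insert fun b hb => ?_, Finset.mem_insert_self _ _⟩
    rcases Finset.mem_map.1 hb with ⟨u, _, rfl⟩
    exact u.2
  · -- injective
    intro s₁ h₁ s₂ h₂ heq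
    have hx : ∀ s : Finset (G.neighborSet x),
        x ∉ s.map (Function.Embedding.subtype _) := by
      intro s hx
      rcases Finset.mem_map.1 hx with ⟨u, _, hu⟩
      have : (u : V) ∈ G.neighborSet x := u.2
      simp only [Function.Embedding.coe_subtype] at hu
      rw [hu] at this
      exact G.irrefl this
    have : s₁.map (Function.Embedding.subtype _) = s₂.map (Function.Embedding.subtype _) := by
      have := congrArg (fun t => Finset.erase t x) heq
      simpa [Finset.erase_insert (hx s₁), Finset.erase_insert (hx s₂)] using this
    exact Finset.map_injective _ this
  · -- surjective
    intro t ht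
    rw [Finset.mem_filter, SimpleGraph.mem_cliqueFinset_iff] at ht
    obtain ⟨htc, hxt⟩ := ht
    have hsub : ∀ v ∈ t.erase x, v ∈ G.neighborSet x := by
      intro v hv
      have hvx := Finset.ne_of_mem_erase hv
      exact htc.1 hxt (Finset.mem_of_mem_erase hv) (Ne.symm hvx)
    refine ⟨(t.erase x).subtype (fun v => v ∈ G.neighborSet x), ?_, ?_⟩
    · rw [SimpleGraph.mem_cliqueFinset_iff]
      constructor
      · intro u hu v hv huv
        have hu' : (u : V) ∈ t.erase x := by
          have := Finset.mem_subtype.1 hu; exact this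
        have hv' : (v : V) ∈ t.erase x := by
          have := Finset.mem_subtype.1 hv; exact this
        have : (u : V) ≠ (v : V) := fun h => huv (Subtype.ext h)
        exact htc.1 (Finset.mem_of_mem_erase hu') (Finset.mem_of_mem_erase hv') this
      · have hmap : ((t.erase x).subtype (fun v => v ∈ G.neighborSet x)).map
            (Function.Embedding.subtype _) = t.erase x := by
          rw [Finset.subtype_map, Finset.filter_true_of_mem hsub]
        have := congrArg Finset.card hmap
        rw [Finset.card_map] at this
        rw [this, Finset.card_erase_of_mem hxt, htc.2]
        omega
    · rw [Finset.subtype_map, Finset.filter_true_of_mem hsub, Finset.insert_erase hxt]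

/-- Double counting: summing sphere clique counts over all vertices. -/
lemma sum_sphere_cliques {V : Type*} [Fintype V] (G : SimpleGraph V) (k : ℕ) :
    ∑ x : V, (((unitSphere G x).cliqueFinset k).card : ℝ)
      = (k + 1) * ((G.cliqueFinset (k + 1)).card : ℝ) := by
  have h1 : ∑ x : V, ((unitSphere G x).cliqueFinset k).card
      = ∑ t ∈ G.cliqueFinset (k + 1), t.card := by
    simp_rw [sphere_clique_card, Finset.card_filter]
    rw [Finset.sum_comm]
    refine Finset.sum_congr rfl fun t _ => ?_
    rw [Finset.sum_ite_mem, Finset.univ_inter, Finset.card_eq_sum_ones]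
  have h2 : ∑ t ∈ G.cliqueFinset (k + 1), t.card = (k + 1) * (G.cliqueFinset (k + 1)).card := by
    rw [Finset.sum_congr rfl fun t ht => (SimpleGraph.mem_cliqueFinset_iff.1 ht).2,
      Finset.sum_const, smul_eq_mul, mul_comm]
  have := congrArg (fun n : ℕ => (n : ℝ)) (h1.trans h2)
  push_cast at this
  rw [← this]

lemma cliqueFinset_card_succ_eq_zero {V : Type*} [Fintype V] (G : SimpleGraph V) :
    (G.cliqueFinset (Fintype.card V + 1)).card = 0 := by
  rw [Finset.card_eq_zero, Finset.eq_empty_iff_forall_notMem]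
  intro t ht
  have := (SimpleGraph.mem_cliqueFinset_iff.1 ht).2
  have hle : t.card ≤ Fintype.card V := Finset.card_le_univ t
  omega

/-- Gauss–Bonnet: `χ(G) = Σ_{x∈V} K(x)`. -/
theorem gauss_bonnet_euler_char {V : Type*} [Fintype V] (G : SimpleGraph V) :
    eulerChar G = ∑ x : V, curvature G x := by
  unfold eulerChar curvature
  rw [Finset.sum_comm]
  have hstep : ∀ k ∈ Finset.range (Fintype.card V + 1),
      (∑ x : V, (-1 : ℝ) ^ k * (((unitSphere G x).cliqueFinset k).card : ℝ) / (k + 1))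
        = (-1 : ℝ) ^ k * ((G.cliqueFinset (k + 1)).card : ℝ) := by
    intro k _
    have hk : ((k : ℝ) + 1) ≠ 0 := by positivity
    rw [← Finset.sum_div, ← Finset.mul_sum, sum_sphere_cliques]
    field_simp
  rw [Finset.sum_congr rfl hstep, Finset.sum_range_succ, cliqueFinset_card_succ_eq_zero]
  simp
end

section
/- Intersection generating function localization: for finite simple graphs G and H on a common vertex set (or subgraphs of a common graph), f_{G,H}(t,s) = Σ_{v∈V(G), w∈V(H)} [ f_{B_g(v),B_g(w)}(t,s) - f_{B_g(v),S_g(w)}(t,s) - f_{S_g(v),B_g(w)}(t,s) + f_{S_g(v),S_g(w)}(t,s) ], where g is a locally injective function, S_g(v) is the sub-level sphere and B_g(v) = S_g(v) ∪ {v} the sub-level ball. -/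
open Finset
open scoped Classical

/-- The intersection generating function of cliques of `A` inside `sA` and cliques of `B`
inside `sB`: `Σ t^{|x|} s^{|y|}` over pairs of intersecting (nonempty) cliques. -/
noncomputable def fInt {V : Type*} [Fintype V] (A B : SimpleGraph V) (sA sB : Set V)
    (t s : ℝ) : ℝ :=
  ∑ x ∈ Finset.univ.filter (fun x : Finset V => A.IsClique (x : Set V) ∧ ↑x ⊆ sA),
    ∑ y ∈ Finset.univ.filter (fun y : Finset V => B.IsClique (y : Set V) ∧ ↑y ⊆ sB),
      if (x ∩ y).Nonempty then t ^ x.card * s ^ y.card else 0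

/-- The sub-level sphere of `v`: neighbors `u` of `v` in `A` with `g u < g v`. -/
def sphSet {V : Type*} (A : SimpleGraph V) (g : V → ℝ) (v : V) : Set V :=
  {u | A.Adj v u ∧ g u < g v}

/-- The sub-level ball `B_g(v) = S_g(v) ∪ {v}`. -/
def ballSet {V : Type*} (A : SimpleGraph V) (g : V → ℝ) (v : V) : Set V :=
  insert v (sphSet A g v)

lemma key_s15 {V : Type*} [Fintype V] (A : SimpleGraph V) (g : V → ℝ)
    (hg : ∀ ⦃a b : V⦄, A.Adj a b → g a ≠ g b) {x : Finset V}
    (hx : A.IsClique (x : Set V)) (hne : x.Nonempty) :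
    ∑ v : V, ((if (x : Set V) ⊆ ballSet A g v then (1:ℝ) else 0)
      - (if (x : Set V) ⊆ sphSet A g v then 1 else 0)) = 1 := by
  obtain ⟨v0, hv0x, hmax⟩ := x.exists_max_image g hne
  rw [Finset.sum_eq_single v0]
  · rw [if_pos, if_neg]
    · ring
    · intro hsub
      exact A.irrefl (hsub hv0x).1
    · intro u hu
      rcases eq_or_ne u v0 with rfl | hne'
      · exact Set.mem_insert _ _
      · have hadj : A.Adj v0 u := hx hv0x hu hne'.symm
        exact Set.mem_insert_of_mem _ ⟨hadj, lt_of_le_of_ne (hmax u hu) (hg hadj).symm⟩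
  · intro v _ hv
    by_cases hvx : v ∈ x
    · rw [if_neg, if_neg]
      · ring
      · intro hsub
        exact A.irrefl (hsub hvx).1
      · intro hsub
        rcases hsub hv0x with h | h
        · exact hv h.symm
        · exact absurd h.2 (not_lt.2 (hmax v hvx))
    · by_cases hsub : (x : Set V) ⊆ sphSet A g v
      · have hball : (x : Set V) ⊆ ballSet A g v := hsub.trans (Set.subset_insert _ _)
        rw [if_pos hball, if_pos hsub]; ring
      · rw [if_neg, if_neg hsub]
        · ring
        · intro hb
          apply hsub
          intro u huu
          rcases hb huu with h | h
          · exact absurd (h ▸ huu) hvx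
          · exact h
  · simp

lemma fInt_eq {V : Type*} [Fintype V] (A B : SimpleGraph V) (sA sB : Set V) (t s : ℝ) :
    fInt A B sA sB t s =
      ∑ x ∈ univ.filter (fun x : Finset V => A.IsClique (x : Set V)),
        ∑ y ∈ univ.filter (fun y : Finset V => B.IsClique (y : Set V)),
          (if (x : Set V) ⊆ sA then (1:ℝ) else 0) * (if (y : Set V) ⊆ sB then 1 else 0) *
            (if (x ∩ y).Nonempty then t ^ x.card * s ^ y.card else 0) := by
  unfold fInt
  simp only [Finset.sum_filter]
  apply Finset.sum_congr rfl
  intro x _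
  by_cases hxc : A.IsClique (x : Set V) <;> by_cases hxs : (x : Set V) ⊆ sA <;>
    simp [hxc, hxs] <;>
  · apply Finset.sum_congr rfl
    intro y _
    by_cases hyc : B.IsClique (y : Set V) <;> by_cases hys : (y : Set V) ⊆ sB <;>
      simp [hyc, hys]

/-- Localization of the intersection generating function: for graphs `G`, `H` on a common
vertex set and locally injective `g`,
`f_{G,H}(t,s) = Σ_{v,w} [f_{B_g(v),B_g(w)} - f_{B_g(v),S_g(w)} - f_{S_g(v),B_g(w)} + f_{S_g(v),S_g(w)}]`. -/
theorem fInt_localization {V : Type*} [Fintype V] (G H : SimpleGraph V) (g : V → ℝ)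
    (hgG : ∀ ⦃a b : V⦄, G.Adj a b → g a ≠ g b)
    (hgH : ∀ ⦃a b : V⦄, H.Adj a b → g a ≠ g b) (t s : ℝ) :
    fInt G H Set.univ Set.univ t s =
      ∑ v : V, ∑ w : V,
        (fInt G H (ballSet G g v) (ballSet H g w) t s
         - fInt G H (ballSet G g v) (sphSet H g w) t s
         - fInt G H (sphSet G g v) (ballSet H g w) t s
         + fInt G H (sphSet G g v) (sphSet H g w) t s) := by
  have hR : ∀ v w : V,
      (fInt G H (ballSet G g v) (ballSet H g w) t s
         - fInt G H (ballSet G g v) (sphSet H g w) t s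
         - fInt G H (sphSet G g v) (ballSet H g w) t s
         + fInt G H (sphSet G g v) (sphSet H g w) t s) =
      ∑ x ∈ univ.filter (fun x : Finset V => G.IsClique (x : Set V)),
        ∑ y ∈ univ.filter (fun y : Finset V => H.IsClique (y : Set V)),
          ((if (x : Set V) ⊆ ballSet G g v then (1:ℝ) else 0)
              - (if (x : Set V) ⊆ sphSet G g v then 1 else 0)) *
          (((if (y : Set V) ⊆ ballSet H g w then (1:ℝ) else 0)
              - (if (y : Set V) ⊆ sphSet H g w then 1 else 0)) *
            (if (x ∩ y).Nonempty then t ^ x.card * s ^ y.card else 0)) := by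
    intro v w
    simp only [fInt_eq, ← Finset.sum_sub_distrib, ← Finset.sum_add_distrib]
    exact Finset.sum_congr rfl fun x _ => Finset.sum_congr rfl fun y _ => by ring
  simp only [hR]
  rw [fInt_eq]
  conv_rhs => enter [2, v]; rw [Finset.sum_comm]
  conv_rhs => rw [Finset.sum_comm]
  conv_rhs => enter [2, x, 2, v]; rw [Finset.sum_comm]
  conv_rhs => enter [2, x]; rw [Finset.sum_comm]
  apply Finset.sum_congr rfl
  intro x hx
  apply Finset.sum_congr rfl
  intro y hy
  simp only [Set.subset_univ, if_true, one_mul]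
  by_cases h : (x ∩ y).Nonempty
  · have hxc : G.IsClique (x : Set V) := (Finset.mem_filter.1 hx).2
    have hyc : H.IsClique (y : Set V) := (Finset.mem_filter.1 hy).2
    have hxn : x.Nonempty := h.mono (Finset.inter_subset_left)
    have hyn : y.Nonempty := h.mono (Finset.inter_subset_right)
    conv_rhs => enter [2, v]; rw [← Finset.mul_sum, ← Finset.sum_mul,
      key_s15 H g hgH hyc hyn, one_mul]
    rw [← Finset.sum_mul, key_s15 G g hgG hxc hxn, one_mul]
  · simp [h]
end

section
/- Evaluation at (t,s)=(-1,-1) of the intersection generating function gives the Wu intersection number: ω(G,H) = -f_{G,H}(-1,-1) = Σ_{x⊂G, y⊂H, x∩y≠∅} (-1)^{dim(x)+dim(y)}, and the localization formula yields the Poincaré-Hopf formula ω(G,H) = Σ_{v,w} i_g(v,w) with i_g(v,w) = ω(B_g(v),B_g(w)) - ω(B_g(v),S_g(w)) - ω(S_g(v),B_g(w)) + ω(S_g(v),S_g(w)). -/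
open Finset
open scoped Classical

/-- The Wu intersection number `ω(A,B)`: the value of the intersection generating
function at `(t,s) = (-1,-1)`. -/
noncomputable def wu {V : Type*} [Fintype V] (A B : SimpleGraph V) (sA sB : Set V) : ℝ :=
  fInt A B sA sB (-1) (-1)

private lemma sum_ball_sub_sph {V : Type*} [Fintype V] (G : SimpleGraph V) (g : V → ℝ)
    (hg : ∀ ⦃a b : V⦄, G.Adj a b → g a ≠ g b) (x : Finset V)
    (hx : G.IsClique (x : Set V)) (hne : x.Nonempty) :
    ∑ v : V, ((if (x : Set V) ⊆ ballSet G g v then (1:ℝ) else 0)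
      - (if (x : Set V) ⊆ sphSet G g v then (1:ℝ) else 0)) = 1 := by
  obtain ⟨m, hm, hmax⟩ := x.exists_max_image g hne
  rw [Finset.sum_eq_single_of_mem m (mem_univ m)]
  · have hball : (x : Set V) ⊆ ballSet G g m := by
      intro u hu
      rcases eq_or_ne u m with h | h
      · exact h ▸ Set.mem_insert _ _
      · have hadj : G.Adj m u := (hx hu (Finset.mem_coe.mpr hm) h).symm
        refine Set.mem_insert_of_mem _ ⟨hadj, ?_⟩
        exact lt_of_le_of_ne (hmax u hu) (fun he => hg hadj he.symm)
    have hsph : ¬ (x : Set V) ⊆ sphSet G g m := fun h =>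
      G.irrefl (h (Finset.mem_coe.mpr hm)).1
    simp [hball, hsph]
  · intro v _ hvm
    by_cases hvx : v ∈ x
    · have h1 : ¬ (x : Set V) ⊆ sphSet G g v := fun h =>
        G.irrefl (h (Finset.mem_coe.mpr hvx)).1
      have h2 : ¬ (x : Set V) ⊆ ballSet G g v := by
        intro h
        rcases h (Finset.mem_coe.mpr hm) with hmv | ⟨hadj, hlt⟩
        · exact hvm hmv.symm
        · exact absurd (hmax v hvx) (not_le.2 hlt)
      simp [h1, h2]
    · have hiff : ((x : Set V) ⊆ ballSet G g v) ↔ ((x : Set V) ⊆ sphSet G g v) := by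
        constructor
        · intro h u hu
          rcases h hu with hu' | hu'
          · exact absurd (hu' ▸ hu) (by simpa using hvx)
          · exact hu'
        · intro h u hu
          exact Set.mem_insert_of_mem _ (h hu)
      simp [hiff]

private lemma wu_expand {V : Type*} [Fintype V] (G H : SimpleGraph V) (sA sB : Set V) :
    wu G H sA sB =
      ∑ x ∈ Finset.univ.filter (fun x : Finset V => G.IsClique (x : Set V)),
        ∑ y ∈ Finset.univ.filter (fun y : Finset V => H.IsClique (y : Set V)),
          (if (x : Set V) ⊆ sA then (1:ℝ) else 0) *
          ((if (y : Set V) ⊆ sB then (1:ℝ) else 0) *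
           (if (x ∩ y).Nonempty then (-1:ℝ) ^ x.card * (-1:ℝ) ^ y.card else 0)) := by
  unfold wu fInt
  rw [← Finset.filter_filter, ← Finset.filter_filter, Finset.sum_filter]
  refine Finset.sum_congr rfl fun x hx => ?_
  by_cases h : (x : Set V) ⊆ sA
  · simp only [h, if_true, one_mul]
    rw [Finset.sum_filter]
    refine Finset.sum_congr rfl fun y hy => ?_
    by_cases h' : (y : Set V) ⊆ sB <;> simp [h']
  · simp [h]

private lemma neg_one_pow_pred {n : ℕ} (hn : 0 < n) : (-1:ℝ) ^ n = -(-1:ℝ) ^ (n - 1) := by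
  obtain ⟨k, rfl⟩ := Nat.exists_eq_succ_of_ne_zero hn.ne'
  simp [pow_succ]

/-- Evaluation at `(t,s)=(-1,-1)`: the Wu intersection number is
`ω(G,H) = Σ_{x⊂G, y⊂H, x∩y≠∅} (-1)^{dim x + dim y}` (with `dim x = |x| - 1`), and
Poincaré–Hopf for the Wu characteristic:
`ω(G,H) = Σ_{v,w} i_g(v,w)` with
`i_g(v,w) = ω(B_g(v),B_g(w)) - ω(B_g(v),S_g(w)) - ω(S_g(v),B_g(w)) + ω(S_g(v),S_g(w))`. -/
theorem wu_poincare_hopf {V : Type*} [Fintype V] (G H : SimpleGraph V) (g : V → ℝ)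
    (hgG : ∀ ⦃a b : V⦄, G.Adj a b → g a ≠ g b)
    (hgH : ∀ ⦃a b : V⦄, H.Adj a b → g a ≠ g b) :
    (wu G H Set.univ Set.univ =
      ∑ x ∈ Finset.univ.filter (fun x : Finset V => G.IsClique (x : Set V)),
        ∑ y ∈ Finset.univ.filter (fun y : Finset V => H.IsClique (y : Set V)),
          if (x ∩ y).Nonempty then
            (-1 : ℝ) ^ (x.card - 1) * (-1 : ℝ) ^ (y.card - 1) else 0)
    ∧ wu G H Set.univ Set.univ =
        ∑ v : V, ∑ w : V,
          (wu G H (ballSet G g v) (ballSet H g w)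
           - wu G H (ballSet G g v) (sphSet H g w)
           - wu G H (sphSet G g v) (ballSet H g w)
           + wu G H (sphSet G g v) (sphSet H g w)) := by
  set CG := Finset.univ.filter (fun x : Finset V => G.IsClique (x : Set V)) with hCG
  set CH := Finset.univ.filter (fun y : Finset V => H.IsClique (y : Set V)) with hCH
  set F : Finset V → Finset V → ℝ :=
    fun x y => if (x ∩ y).Nonempty then (-1:ℝ) ^ x.card * (-1:ℝ) ^ y.card else 0 with hF
  have hLHS : wu G H Set.univ Set.univ = ∑ x ∈ CG, ∑ y ∈ CH, F x y := by
    rw [wu_expand]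
    simp [hF, hCG, hCH]
  constructor
  · rw [hLHS]
    refine Finset.sum_congr rfl fun x hx => Finset.sum_congr rfl fun y hy => ?_
    by_cases h : (x ∩ y).Nonempty
    · obtain ⟨a, ha⟩ := id h
      have hxn : x.Nonempty := ⟨a, (mem_inter.mp ha).1⟩
      have hyn : y.Nonempty := ⟨a, (mem_inter.mp ha).2⟩
      have hxpos : 0 < x.card := Finset.card_pos.mpr hxn
      have hypos : 0 < y.card := Finset.card_pos.mpr hyn
      simp only [hF, if_pos h, neg_one_pow_pred hxpos, neg_one_pow_pred hypos]
      ring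
    · simp [hF, h]
  · rw [hLHS]
    set P : V → Finset V → ℝ := fun v x =>
      (if (x : Set V) ⊆ ballSet G g v then (1:ℝ) else 0)
        - (if (x : Set V) ⊆ sphSet G g v then (1:ℝ) else 0) with hP
    set Q : V → Finset V → ℝ := fun w y =>
      (if (y : Set V) ⊆ ballSet H g w then (1:ℝ) else 0)
        - (if (y : Set V) ⊆ sphSet H g w then (1:ℝ) else 0) with hQ
    have step1 : ∀ v w : V,
        (wu G H (ballSet G g v) (ballSet H g w)
           - wu G H (ballSet G g v) (sphSet H g w)
           - wu G H (sphSet G g v) (ballSet H g w)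
           + wu G H (sphSet G g v) (sphSet H g w))
        = ∑ x ∈ CG, ∑ y ∈ CH, P v x * (Q w y * F x y) := by
      intro v w
      simp only [wu_expand, ← hCG, ← hCH, ← hF]
      simp only [← Finset.sum_sub_distrib, ← Finset.sum_add_distrib]
      refine Finset.sum_congr rfl fun x _ => Finset.sum_congr rfl fun y _ => ?_
      simp only [hP, hQ]
      ring
    have swap : ∑ v : V, ∑ w : V, ∑ x ∈ CG, ∑ y ∈ CH, P v x * (Q w y * F x y)
        = ∑ x ∈ CG, ∑ y ∈ CH, ∑ v : V, ∑ w : V, P v x * (Q w y * F x y) := by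
      have h1 : ∀ v : V, (∑ w : V, ∑ x ∈ CG, ∑ y ∈ CH, P v x * (Q w y * F x y))
          = ∑ x ∈ CG, ∑ y ∈ CH, ∑ w : V, P v x * (Q w y * F x y) := by
        intro v
        rw [Finset.sum_comm]
        exact Finset.sum_congr rfl fun x _ => by rw [Finset.sum_comm]
      simp only [h1]
      rw [Finset.sum_comm]
      exact Finset.sum_congr rfl fun x _ => by rw [Finset.sum_comm]
    rw [Finset.sum_congr rfl fun v _ => Finset.sum_congr rfl fun w _ => step1 v w, swap]
    refine Finset.sum_congr rfl fun x hx => Finset.sum_congr rfl fun y hy => ?_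
    have hsum : ∑ v : V, ∑ w : V, P v x * (Q w y * F x y)
        = (∑ v : V, P v x) * ((∑ w : V, Q w y) * F x y) := by
      rw [Finset.sum_mul]
      refine Finset.sum_congr rfl fun v _ => ?_
      rw [← Finset.mul_sum, ← Finset.sum_mul]
    rw [hsum]
    by_cases h : (x ∩ y).Nonempty
    · obtain ⟨a, ha⟩ := h
      have hxc : G.IsClique (x : Set V) := (Finset.mem_filter.mp hx).2
      have hyc : H.IsClique (y : Set V) := (Finset.mem_filter.mp hy).2
      have hxn : x.Nonempty := ⟨a, (mem_inter.mp ha).1⟩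
      have hyn : y.Nonempty := ⟨a, (mem_inter.mp ha).2⟩
      rw [hP, hQ, sum_ball_sub_sph G g hgG x hxc hxn, sum_ball_sub_sph H g hgH y hyc hyn]
      ring
    · simp [hF, h]
end
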